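/- Let f:ℝ^d→ℝ be continuous and let v ∈ C^{1,2}([0,T)×ℝ^d)∩C([0,T]×ℝ^d) solve ∂v/∂t + ℒv = 0 on [0,T)×ℝ^d with v(T,x)=f(x). Then for every S∈𝒮_a and every t∈[0,T): the Föllmer integral ∫_0^t ∇_x v(s,S(s))·dS(s) exists as the limit of Riemann sums along (𝕋_n), and v(t,S(t)) = v(0,S(0)) + ∫_0^t ∇_x v(s,S(s))·dS(s); moreover lim_{t↑T} v(t,S(t)) = f(S(T)). In particular, the self-financing strategy ξ^S(t):=∇_x v(t,S(t)), η^S(t):=v(t,S(t))−ξ^S(t)·S(t) perfectly replicates the payoff f(S(T)) for every S∈𝒮_a. The analogous statement holds on ℝ_+^d with ℒ^+ and 𝒮_a^+. -/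

import Mathlib

open Finset Filter Topology Set

noncomputable section

/-- The successor `s'` of `s` in the partition `P` of `[0,T]` (equal to `T` if there is none). -/
def succOf (T : ℝ) (P : Finset ℝ) (s : ℝ) : ℝ :=
  if h : (P.filter (fun u => s < u)).Nonempty then (P.filter (fun u => s < u)).min' h else T

/-- A refining sequence of partitions of `[0,T]` whose meshes tend to zero. -/
structure PartitionSeq (T : ℝ) where
  part : ℕ → Finset ℝ
  subset_Icc : ∀ n, ↑(part n) ⊆ Set.Icc (0 : ℝ) T
  zero_mem : ∀ n, (0 : ℝ) ∈ part n
  top_mem : ∀ n, T ∈ part n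
  refining : ∀ n, part n ⊆ part (n + 1)
  mesh_to_zero : ∀ ε > 0, ∃ N, ∀ n ≥ N, ∀ s ∈ part n, succOf T (part n) s - s < ε
/-- Approximating sums for the covariation `⟨S_i,S_j⟩(t)` along the `n`-th partition. -/
def covSum (T : ℝ) (𝕋 : PartitionSeq T) {d : ℕ} (S : ℝ → Fin d → ℝ) (i j : Fin d)
    (t : ℝ) (n : ℕ) : ℝ :=
  ∑ s ∈ (𝕋.part n).filter (fun s => s ≤ t),
    (S (succOf T (𝕋.part n) s) i - S s i) * (S (succOf T (𝕋.part n) s) j - S s j)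

/-- The Föllmer integral `∫_r^t ξ(s)·dS(s)` exists along `(𝕋_n)` with value `I`. -/
def HasFollmerIntegral (T : ℝ) (𝕋 : PartitionSeq T) {d : ℕ} (ξ S : ℝ → Fin d → ℝ)
    (r t I : ℝ) : Prop :=
  Tendsto (fun n => ∑ s ∈ (𝕋.part n).filter (fun s => r ≤ s ∧ s ≤ t),
    ∑ k, ξ s k * (S (succOf T (𝕋.part n) s) k - S s k)) atTop (𝓝 I)

/-- The open positive orthant `ℝ_+^d`. -/
def posOrth (d : ℕ) : Set (Fin d → ℝ) := {x | ∀ i, 0 < x i}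

/-- The class `𝒮_a`: continuous trajectories whose covariations are `∫_0^t a_ij(s,S(s)) ds`. -/
def SclassA (T : ℝ) (𝕋 : PartitionSeq T) {d : ℕ}
    (a : ℝ → (Fin d → ℝ) → Fin d → Fin d → ℝ) : Set (ℝ → Fin d → ℝ) :=
  {S | ContinuousOn S (Set.Icc 0 T) ∧
    ∀ i j : Fin d, ∀ t ∈ Set.Icc (0 : ℝ) T,
      Tendsto (fun n => covSum T 𝕋 S i j t n) atTop (𝓝 (∫ s in (0 : ℝ)..t, a s (S s) i j))}

/-- The class `𝒮_a^+`: positive continuous trajectories whose covariations are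
`∫_0^t a_ij(s,S(s)) S_i(s) S_j(s) ds`. -/
def SclassAPos (T : ℝ) (𝕋 : PartitionSeq T) {d : ℕ}
    (a : ℝ → (Fin d → ℝ) → Fin d → Fin d → ℝ) : Set (ℝ → Fin d → ℝ) :=
  {S | ContinuousOn S (Set.Icc 0 T) ∧ (∀ t ∈ Set.Icc (0 : ℝ) T, ∀ i, 0 < S t i) ∧
    ∀ i j : Fin d, ∀ t ∈ Set.Icc (0 : ℝ) T,
      Tendsto (fun n => covSum T 𝕋 S i j t n) atTop
        (𝓝 (∫ s in (0 : ℝ)..t, a s (S s) i j * S s i * S s j))}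

/-- First partial derivative in the `i`-th space direction. -/
def pd1 {d : ℕ} (f : (Fin d → ℝ) → ℝ) (i : Fin d) (x : Fin d → ℝ) : ℝ :=
  fderiv ℝ f x (Pi.single i 1)

/-- Second partial derivative in the space directions `i, j`. -/
def pd2 {d : ℕ} (f : (Fin d → ℝ) → ℝ) (i j : Fin d) (x : Fin d → ℝ) : ℝ :=
  fderiv ℝ (fun y => pd1 f j y) x (Pi.single i 1)

/-- Time derivative (within the time interval `I`). -/
def tderiv {d : ℕ} (I : Set ℝ) (v : ℝ → (Fin d → ℝ) → ℝ) (t : ℝ) (x : Fin d → ℝ) : ℝ :=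
  derivWithin (fun τ => v τ x) I t

/-- `v` is of class `C^{1,2}(I × D)`: continuous on `I × D`, continuously differentiable in
`(t,x)` and twice continuously differentiable in `x` on `(int I) × D`, with all derivatives
admitting continuous extensions to `I × D`. -/
structure IsC12 {d : ℕ} (I : Set ℝ) (D : Set (Fin d → ℝ)) (v : ℝ → (Fin d → ℝ) → ℝ) : Prop where
  cont : ContinuousOn (fun p : ℝ × (Fin d → ℝ) => v p.1 p.2) (I ×ˢ D)
  diff : ∀ t ∈ interior I, ∀ x ∈ D,
    DifferentiableAt ℝ (fun p : ℝ × (Fin d → ℝ) => v p.1 p.2) (t, x)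
  diff2 : ∀ t ∈ interior I, ∀ x ∈ D, ∀ j : Fin d, DifferentiableAt ℝ (pd1 (v t) j) x
  derivs_extend : ∃ (gt : ℝ × (Fin d → ℝ) → ℝ) (gx : Fin d → ℝ × (Fin d → ℝ) → ℝ)
      (gxx : Fin d → Fin d → ℝ × (Fin d → ℝ) → ℝ),
    ContinuousOn gt (I ×ˢ D) ∧ (∀ i, ContinuousOn (gx i) (I ×ˢ D)) ∧
    (∀ i j, ContinuousOn (gxx i j) (I ×ˢ D)) ∧
    ∀ t ∈ interior I, ∀ x ∈ D,
      gt (t, x) = deriv (fun τ => v τ x) t ∧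
      (∀ i, gx i (t, x) = pd1 (v t) i x) ∧
      ∀ i j, gxx i j (t, x) = pd2 (v t) i j x






section succ
variable {T : ℝ} {P : Finset ℝ}

lemma succOf_le_of_subset (hP : ↑P ⊆ Set.Icc (0:ℝ) T) (hT : 0 ≤ T) (s : ℝ) : succOf T P s ≤ T := by
  unfold succOf
  split_ifs with h
  · have := (P.filter (fun u => s < u)).min'_mem h
    have := hP (by exact_mod_cast Finset.mem_of_mem_filter _ this)
    exact this.2
  · exact le_refl T

lemma lt_succOf (hTP : T ∈ P) {s : ℝ} (hs : s < T) : s < succOf T P s := by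
  unfold succOf
  have hne : (P.filter (fun u => s < u)).Nonempty := ⟨T, Finset.mem_filter.2 ⟨hTP, hs⟩⟩
  rw [dif_pos hne]
  have := (P.filter (fun u => s < u)).min'_mem hne
  exact (Finset.mem_filter.1 this).2

lemma succOf_mem (hTP : T ∈ P) {s : ℝ} (hs : s < T) : succOf T P s ∈ P := by
  unfold succOf
  have hne : (P.filter (fun u => s < u)).Nonempty := ⟨T, Finset.mem_filter.2 ⟨hTP, hs⟩⟩
  rw [dif_pos hne]
  exact Finset.mem_of_mem_filter _ ((P.filter (fun u => s < u)).min'_mem hne)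

lemma le_succOf (hP : ↑P ⊆ Set.Icc (0:ℝ) T) {s : ℝ} (hs : s ∈ P) : s ≤ succOf T P s := by
  unfold succOf
  split_ifs with h
  · exact le_of_lt (Finset.mem_filter.1 ((P.filter (fun u => s < u)).min'_mem h)).2
  · exact (hP hs).2

lemma succOf_le_of_mem_gt {u s : ℝ} (hu : u ∈ P) (hsu : s < u) : succOf T P s ≤ u := by
  unfold succOf
  have hne : (P.filter (fun r => s < r)).Nonempty := ⟨u, Finset.mem_filter.2 ⟨hu, hsu⟩⟩
  rw [dif_pos hne]
  exact Finset.min'_le _ _ (Finset.mem_filter.2 ⟨hu, hsu⟩)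

end succ

def nextAfter (T t : ℝ) (P : Finset ℝ) : ℝ :=
  succOf T P (if h : (P.filter (fun s => s ≤ t)).Nonempty
    then (P.filter (fun s => s ≤ t)).max' h else 0)

section tele
variable {T t : ℝ} {P : Finset ℝ}

lemma filter_le_nonempty (h0 : (0:ℝ) ∈ P) (ht : 0 ≤ t) :
    (P.filter (fun s => s ≤ t)).Nonempty := ⟨0, Finset.mem_filter.2 ⟨h0, ht⟩⟩

lemma nextAfter_eq (h0 : (0:ℝ) ∈ P) (ht : 0 ≤ t) :
    nextAfter T t P = succOf T P ((P.filter (fun s => s ≤ t)).max' (filter_le_nonempty h0 ht)) := by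
  unfold nextAfter
  rw [dif_pos (filter_le_nonempty h0 ht)]

lemma lt_nextAfter (hP : ↑P ⊆ Set.Icc (0:ℝ) T) (h0 : (0:ℝ) ∈ P) (hTP : T ∈ P)
    (ht : 0 ≤ t) (htT : t < T) : t < nextAfter T t P := by
  rw [nextAfter_eq h0 ht]
  set Q := P.filter (fun s => s ≤ t) with hQ
  have hQne := filter_le_nonempty h0 ht
  set m := Q.max' hQne with hm
  have hmQ : m ∈ Q := Q.max'_mem hQne
  have hmP : m ∈ P := Finset.mem_of_mem_filter _ hmQ
  have hmt : m ≤ t := (Finset.mem_filter.1 hmQ).2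
  by_contra hc
  push_neg at hc
  have h1 : succOf T P m ∈ P := succOf_mem hTP (lt_of_le_of_lt hmt htT)
  have h2 : succOf T P m ∈ Q := Finset.mem_filter.2 ⟨h1, hc⟩
  have h3 : succOf T P m ≤ m := Finset.le_max' _ _ h2
  exact absurd (lt_succOf hTP (lt_of_le_of_lt hmt htT)) (not_lt.2 h3)

lemma nextAfter_le (hP : ↑P ⊆ Set.Icc (0:ℝ) T) (hT : 0 ≤ T) : nextAfter T t P ≤ T :=
  succOf_le_of_subset hP hT _

lemma nextAfter_lt_add (h0 : (0:ℝ) ∈ P) (ht : 0 ≤ t) {δ : ℝ}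
    (hmesh : ∀ s ∈ P, succOf T P s - s < δ) : nextAfter T t P < t + δ := by
  rw [nextAfter_eq h0 ht]
  have hQne := filter_le_nonempty h0 ht
  set m := (P.filter (fun s => s ≤ t)).max' hQne with hm
  have hmQ : m ∈ P.filter (fun s => s ≤ t) := Finset.max'_mem _ hQne
  have hmP : m ∈ P := Finset.mem_of_mem_filter _ hmQ
  have hmt : m ≤ t := (Finset.mem_filter.1 hmQ).2
  have := hmesh m hmP
  linarith

set_option maxHeartbeats 1000000 in
lemma sum_telescope_filter (hP : ↑P ⊆ Set.Icc (0:ℝ) T) (h0 : (0:ℝ) ∈ P) (hTP : T ∈ P)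
    (ht : 0 ≤ t) (htT : t < T) (g : ℝ → ℝ) :
    ∑ s ∈ P.filter (fun s => s ≤ t), (g (succOf T P s) - g s)
      = g (nextAfter T t P) - g 0 := by
  classical
  set Q := P.filter (fun s => s ≤ t) with hQ
  have hQne := filter_le_nonempty h0 ht
  set m := Q.max' hQne with hm
  have hmQ : m ∈ Q := Q.max'_mem hQne
  have hmP : m ∈ P := Finset.mem_of_mem_filter _ hmQ
  have hmt : m ≤ t := by
    have := Finset.mem_filter.1 hmQ; exact this.2
  have h0Q : (0:ℝ) ∈ Q := Finset.mem_filter.2 ⟨h0, ht⟩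
  have hQP : ∀ s ∈ Q, s ∈ P := fun s hs => Finset.mem_of_mem_filter _ hs
  have hQle : ∀ s ∈ Q, s ≤ t := fun s hs => (Finset.mem_filter.1 hs).2
  have hsnn : ∀ s ∈ P, (0:ℝ) ≤ s := fun s hs => (hP hs).1
  -- the bijection
  have key : ∑ s ∈ Q.erase m, g (succOf T P s) = ∑ u ∈ Q.erase 0, g u := by
    apply Finset.sum_bij (i := fun s _ => succOf T P s)
    · intro s hs
      obtain ⟨hsm, hsQ⟩ := Finset.mem_erase.1 hs
      have hsP := hQP s hsQ
      have hslm : s < m := lt_of_le_of_ne (Finset.le_max' _ _ hsQ) hsm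
      have hsT : s < T := lt_of_lt_of_le hslm (le_trans hmt (le_of_lt htT))
      have h1 : succOf T P s ∈ P := succOf_mem hTP hsT
      have h2 : succOf T P s ≤ m := succOf_le_of_mem_gt hmP hslm
      refine Finset.mem_erase.2 ⟨?_, Finset.mem_filter.2 ⟨h1, le_trans h2 hmt⟩⟩
      have : s < succOf T P s := lt_succOf hTP hsT
      have := hsnn s hsP
      linarith
    · intro s₁ hs₁ s₂ hs₂ heqq
      by_contra hne
      rcases lt_or_gt_of_ne hne with hlt | hlt
      · obtain ⟨hsm, hsQ⟩ := Finset.mem_erase.1 hs₂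
        have hsT : s₂ < T := by
          have : s₂ ≤ t := hQle _ hsQ
          linarith
        have := succOf_le_of_mem_gt (T := T) (hQP _ hsQ) hlt
        have := lt_succOf hTP hsT
        rw [heqq] at *
        linarith
      · obtain ⟨hsm, hsQ⟩ := Finset.mem_erase.1 hs₁
        have hsT : s₁ < T := by
          have : s₁ ≤ t := hQle _ hsQ
          linarith
        have := succOf_le_of_mem_gt (T := T) (hQP _ hsQ) hlt
        have := lt_succOf hTP hsT
        rw [heqq] at *
        linarith
    · intro u hu
      obtain ⟨hu0, huQ⟩ := Finset.mem_erase.1 hu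
      have huP := hQP u huQ
      have hupos : 0 < u := lt_of_le_of_ne (hsnn u huP) (Ne.symm hu0)
      have hFne : (P.filter (fun r => r < u)).Nonempty :=
        ⟨0, Finset.mem_filter.2 ⟨h0, hupos⟩⟩
      set p := (P.filter (fun r => r < u)).max' hFne with hp
      have hpF : p ∈ P.filter (fun r => r < u) := Finset.max'_mem _ hFne
      have hpP : p ∈ P := Finset.mem_of_mem_filter _ hpF
      have hpu : p < u := (Finset.mem_filter.1 hpF).2
      have hut : u ≤ t := hQle _ huQ
      have hpt : p ≤ t := le_of_lt (lt_of_lt_of_le hpu hut)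
      have hpm : p ≠ m := by
        intro hpm'
        have hum : u ≤ m := Finset.le_max' _ _ huQ
        rw [hpm'] at hpu; linarith
      have hpT : p < T := by linarith
      have hψp : succOf T P p = u := by
        have h1 : succOf T P p ≤ u := succOf_le_of_mem_gt huP hpu
        have h2 : succOf T P p ∈ P := succOf_mem hTP hpT
        have h3 : p < succOf T P p := lt_succOf hTP hpT
        rcases lt_or_eq_of_le h1 with hlt | heq
        · exfalso
          have hmemF : succOf T P p ∈ P.filter (fun r => r < u) := Finset.mem_filter.2 ⟨h2, hlt⟩
          have : succOf T P p ≤ p := Finset.le_max' _ _ hmemF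
          linarith
        · exact heq
      exact ⟨p, Finset.mem_erase.2 ⟨hpm, Finset.mem_filter.2 ⟨hpP, hpt⟩⟩, hψp⟩
    · intro s hs; rfl
  have hsplit1 : ∑ s ∈ Q, g (succOf T P s) = ∑ s ∈ Q.erase m, g (succOf T P s) + g (succOf T P m) :=
    (Finset.sum_erase_add Q _ hmQ).symm
  have hsplit2 : ∑ u ∈ Q.erase 0, g u + g 0 = ∑ u ∈ Q, g u :=
    Finset.sum_erase_add Q _ h0Q
  have hna : nextAfter T t P = succOf T P m := nextAfter_eq h0 ht
  rw [Finset.sum_sub_distrib, hsplit1, key, hna]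
  linarith [hsplit2]

end tele

lemma tendsto_of_abs_le_eventually {X : ℕ → ℝ} {L : ℝ}
    (h : ∀ ε > 0, ∀ᶠ n in atTop, |X n - L| ≤ ε) : Tendsto X atTop (𝓝 L) := by
  rw [Metric.tendsto_atTop]
  intro ε hε
  obtain ⟨N, hN⟩ := (h (ε/2) (by linarith)).exists_forall_of_atTop
  exact ⟨N, fun n hn => by have := hN n hn; rw [Real.dist_eq]; linarith⟩

lemma weighted_qv_tendsto {T : ℝ} (hT : 0 < T) (P : ℕ → Finset ℝ)
    (hPIcc : ∀ n, ↑(P n) ⊆ Set.Icc (0 : ℝ) T)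
    (c : ℕ → ℝ → ℝ) (hc : ∀ n, ∀ s ∈ P n, 0 ≤ c n s)
    (α : ℝ → ℝ) (hα : ContinuousOn α (Set.Icc 0 T))
    (hconv : ∀ r ∈ Set.Icc (0:ℝ) T,
      Tendsto (fun n => ∑ s ∈ (P n).filter (fun s => s ≤ r), c n s) atTop
        (𝓝 (∫ u in (0:ℝ)..r, α u)))
    (g : ℝ → ℝ) (hg : ContinuousOn g (Set.Icc 0 T))
    {t : ℝ} (ht : t ∈ Set.Icc (0:ℝ) T) :
    Tendsto (fun n => ∑ s ∈ (P n).filter (fun s => s ≤ t), g s * c n s) atTop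
      (𝓝 (∫ u in (0:ℝ)..t, g u * α u)) := by
  classical
  obtain ⟨ht0, htT⟩ := ht
  set A : ℝ → ℝ := fun r => ∫ u in (0:ℝ)..r, α u with hA
  have hIcc_sub : ∀ r1 r2 : ℝ, r1 ∈ Set.Icc (0:ℝ) T → r2 ∈ Set.Icc (0:ℝ) T →
      Set.uIcc r1 r2 ⊆ Set.Icc (0:ℝ) T := by
    intro r1 r2 h1 h2
    exact Set.uIcc_subset_Icc h1 h2
  have hαint : ∀ r1 r2 : ℝ, r1 ∈ Set.Icc (0:ℝ) T → r2 ∈ Set.Icc (0:ℝ) T →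
      IntervalIntegrable α MeasureTheory.volume r1 r2 := fun r1 r2 h1 h2 =>
    (hα.mono (hIcc_sub r1 r2 h1 h2)).intervalIntegrable
  have hgαint : ∀ r1 r2 : ℝ, r1 ∈ Set.Icc (0:ℝ) T → r2 ∈ Set.Icc (0:ℝ) T →
      IntervalIntegrable (fun u => g u * α u) MeasureTheory.volume r1 r2 := fun r1 r2 h1 h2 =>
    ((hg.mono (hIcc_sub r1 r2 h1 h2)).mul (hα.mono (hIcc_sub r1 r2 h1 h2))).intervalIntegrable
  set C0 : ℝ := |A t| + 1 with hC0
  set C1 : ℝ := ∫ u in (0:ℝ)..t, |α u| with hC1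
  have hC1nn : 0 ≤ C1 :=
    intervalIntegral.integral_nonneg ht0 (fun u _ => abs_nonneg _)
  set I : ℝ := ∫ u in (0:ℝ)..t, g u * α u with hI
  -- main ε-claim
  have main : ∀ ε > 0, ∀ᶠ n in atTop,
      |(∑ s ∈ (P n).filter (fun s => s ≤ t), g s * c n s) - I| ≤ ε * (C0 + C1 + 1) := by
    intro ε hε
    -- uniform continuity of g
    have hgu : ∀ ε' > 0, ∃ δ > 0, ∀ x ∈ Set.Icc (0:ℝ) T, ∀ y ∈ Set.Icc (0:ℝ) T,
        |x - y| < δ → |g x - g y| ≤ ε' := by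
      intro ε' hε'
      have := (isCompact_Icc.uniformContinuousOn_of_continuous hg)
      rw [Metric.uniformContinuousOn_iff] at this
      obtain ⟨δ, hδ, hδ'⟩ := this ε' hε'
      exact ⟨δ, hδ, fun x hx y hy hxy =>
        le_of_lt (by rw [← Real.dist_eq]; exact hδ' x hx y hy (by rwa [Real.dist_eq]))⟩
    obtain ⟨δ, hδpos, hgδ⟩ := hgu ε hε
    -- grid
    obtain ⟨m, hm⟩ := exists_nat_gt (t / δ)
    set M : ℕ := m + 1 with hM
    have hMpos : (0:ℝ) < M := by positivity
    have hstep : t / M < δ := by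
      rw [div_lt_iff₀ hMpos]
      have : t / δ < M := lt_of_lt_of_le hm (by exact_mod_cast Nat.le_succ m)
      calc t = (t / δ) * δ := by field_simp
        _ < (M:ℝ) * δ := by apply mul_lt_mul_of_pos_right this hδpos
        _ = δ * M := by ring
    have hstep_nn : 0 ≤ t / M := by positivity
    set r : ℕ → ℝ := fun k => (k : ℝ) * t / M with hr
    have hr0 : r 0 = 0 := by simp [hr]
    have hrM : r M = t := by simp only [hr]; exact mul_div_cancel_left₀ t (ne_of_gt hMpos)
    have hrdiff : ∀ k, r (k+1) - r k = t / M := by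
      intro k; simp only [hr]; push_cast; field_simp; ring
    have hrmono : ∀ k, r k ≤ r (k+1) := fun k => by
      have := hrdiff k; linarith [hstep_nn]
    have hrmem : ∀ k, k ≤ M → r k ∈ Set.Icc (0:ℝ) T := by
      intro k hk
      constructor
      · have : (0:ℝ) ≤ (k:ℝ) * t := by positivity
        exact div_nonneg this (le_of_lt hMpos)
      · have h1 : (k:ℝ) * t ≤ (M:ℝ) * t := by
          apply mul_le_mul_of_nonneg_right _ ht0
          exact_mod_cast hk
        have : r k ≤ t := by
          rw [hr]; rw [div_le_iff₀ hMpos]; simpa [mul_comm] using h1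
        linarith
    -- decomposition of filtered sums
    have hsubk : ∀ n k, (P n).filter (fun s => s ≤ r k) ⊆ (P n).filter (fun s => s ≤ r (k+1)) := by
      intro n k
      apply Finset.monotone_filter_right
      intro x _ hx; exact le_trans hx (hrmono k)
    have decomp : ∀ (F : ℝ → ℝ) (n : ℕ),
        ∑ s ∈ (P n).filter (fun s => s ≤ t), F s
          = (∑ s ∈ (P n).filter (fun s => s ≤ r 0), F s)
            + ∑ k ∈ Finset.range M,
                ∑ s ∈ (P n).filter (fun s => s ≤ r (k+1)) \ (P n).filter (fun s => s ≤ r k), F s := by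
      intro F n
      have key : ∀ K : ℕ, ∑ s ∈ (P n).filter (fun s => s ≤ r K), F s
          = (∑ s ∈ (P n).filter (fun s => s ≤ r 0), F s)
            + ∑ k ∈ Finset.range K,
                ∑ s ∈ (P n).filter (fun s => s ≤ r (k+1)) \ (P n).filter (fun s => s ≤ r k), F s := by
        intro K
        induction K with
        | zero => simp
        | succ K ih =>
          rw [Finset.sum_range_succ, ← add_assoc, ← ih]
          have := Finset.sum_sdiff (f := F) (hsubk n K)
          linarith
      have := key M
      rwa [hrM] at this
    -- the approximation Y n and its limit Y
    set B : ℕ → ℝ → ℝ := fun n ρ => ∑ s ∈ (P n).filter (fun s => s ≤ ρ), c n s with hB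
    set Y : ℕ → ℝ := fun n => g 0 * B n (r 0)
        + ∑ k ∈ Finset.range M, g (r (k+1)) * (B n (r (k+1)) - B n (r k)) with hY
    set Ylim : ℝ := g 0 * A (r 0)
        + ∑ k ∈ Finset.range M, g (r (k+1)) * (A (r (k+1)) - A (r k)) with hYlim
    have hYtend : Tendsto Y atTop (𝓝 Ylim) := by
      apply Tendsto.add
      · exact (hconv (r 0) (hrmem 0 (Nat.zero_le M))).const_mul _
      · apply tendsto_finset_sum
        intro k hk
        have hk' : k + 1 ≤ M := Finset.mem_range.1 hk
        exact (((hconv (r (k+1)) (hrmem _ hk')).sub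
          (hconv (r k) (hrmem _ (le_trans (Nat.le_succ k) hk')))).const_mul _)
    -- |X n - Y n| ≤ ε * B n t
    have hXY : ∀ n, |(∑ s ∈ (P n).filter (fun s => s ≤ t), g s * c n s) - Y n| ≤ ε * B n t := by
      intro n
      have hd1 := decomp (fun s => g s * c n s) n
      have hd2 := decomp (c n) n
      have hBdiff : ∀ k, B n (r (k+1)) - B n (r k)
          = ∑ s ∈ (P n).filter (fun s => s ≤ r (k+1)) \ (P n).filter (fun s => s ≤ r k), c n s := by
        intro k
        have := Finset.sum_sdiff (f := c n) (hsubk n k)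
        simp only [hB]; linarith
      have hfirst : ∑ s ∈ (P n).filter (fun s => s ≤ r 0), g s * c n s
          = g 0 * B n (r 0) := by
        rw [hB]
        simp only [Finset.mul_sum]
        apply Finset.sum_congr rfl
        intro s hs
        have hs' := Finset.mem_filter.1 hs
        have hs0 : s = 0 := le_antisymm (by rw [← hr0]; exact hs'.2) ((hPIcc n hs'.1).1)
        rw [hs0]
      have hXn : (∑ s ∈ (P n).filter (fun s => s ≤ t), g s * c n s) - Y n
          = ∑ k ∈ Finset.range M,
              ∑ s ∈ (P n).filter (fun s => s ≤ r (k+1)) \ (P n).filter (fun s => s ≤ r k),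
                (g s - g (r (k+1))) * c n s := by
        have hk : ∀ k ∈ Finset.range M,
            (∑ s ∈ (P n).filter (fun s => s ≤ r (k+1)) \ (P n).filter (fun s => s ≤ r k),
                g s * c n s) - g (r (k+1)) * (B n (r (k+1)) - B n (r k))
              = ∑ s ∈ (P n).filter (fun s => s ≤ r (k+1)) \ (P n).filter (fun s => s ≤ r k),
                  (g s - g (r (k+1))) * c n s := by
          intro k _
          rw [hBdiff k, Finset.mul_sum, ← Finset.sum_sub_distrib]
          exact Finset.sum_congr rfl fun s _ => by ring
        calc (∑ s ∈ (P n).filter (fun s => s ≤ t), g s * c n s) - Y n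
            = ∑ k ∈ Finset.range M,
                ((∑ s ∈ (P n).filter (fun s => s ≤ r (k+1)) \ (P n).filter (fun s => s ≤ r k),
                  g s * c n s) - g (r (k+1)) * (B n (r (k+1)) - B n (r k))) := by
              rw [hd1, hfirst]
              simp only [hY]
              rw [Finset.sum_sub_distrib]
              ring
          _ = _ := Finset.sum_congr rfl hk
      rw [hXn]
      calc |∑ k ∈ Finset.range M, ∑ s ∈ _ \ _, (g s - g (r (k+1))) * c n s|
          ≤ ∑ k ∈ Finset.range M, |∑ s ∈ (P n).filter (fun s => s ≤ r (k+1)) \ (P n).filter (fun s => s ≤ r k),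
              (g s - g (r (k+1))) * c n s| := Finset.abs_sum_le_sum_abs _ _
        _ ≤ ∑ k ∈ Finset.range M, ∑ s ∈ (P n).filter (fun s => s ≤ r (k+1)) \ (P n).filter (fun s => s ≤ r k),
              ε * c n s := by
            apply Finset.sum_le_sum
            intro k hk
            have hk' : k + 1 ≤ M := Finset.mem_range.1 hk
            calc |∑ s ∈ _ \ _, (g s - g (r (k+1))) * c n s|
                ≤ ∑ s ∈ (P n).filter (fun s => s ≤ r (k+1)) \ (P n).filter (fun s => s ≤ r k),
                    |(g s - g (r (k+1))) * c n s| := Finset.abs_sum_le_sum_abs _ _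
              _ ≤ _ := by
                  apply Finset.sum_le_sum
                  intro s hs
                  obtain ⟨hs1, hs2⟩ := Finset.mem_sdiff.1 hs
                  have hsP : s ∈ P n := Finset.mem_of_mem_filter _ hs1
                  have hsle : s ≤ r (k+1) := (Finset.mem_filter.1 hs1).2
                  have hsgt : r k < s := by
                    by_contra hcon
                    push_neg at hcon
                    exact hs2 (Finset.mem_filter.2 ⟨hsP, hcon⟩)
                  have hcnn : 0 ≤ c n s := hc n s hsP
                  rw [abs_mul, abs_of_nonneg hcnn]
                  apply mul_le_mul_of_nonneg_right _ hcnn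
                  apply hgδ s (hPIcc n hsP) (r (k+1)) (hrmem _ hk')
                  have := hrdiff k
                  rw [abs_sub_lt_iff]
                  constructor <;> [linarith [hstep]; linarith [hstep]]
        _ = ∑ k ∈ Finset.range M, ε *
              ∑ s ∈ (P n).filter (fun s => s ≤ r (k+1)) \ (P n).filter (fun s => s ≤ r k), c n s := by
            apply Finset.sum_congr rfl; intro k _; rw [Finset.mul_sum]
        _ ≤ ε * B n t := by
            rw [← Finset.mul_sum]
            apply mul_le_mul_of_nonneg_left _ (le_of_lt hε)
            have hd2 := decomp (c n) n
            have hfirst_nn : 0 ≤ ∑ s ∈ (P n).filter (fun s => s ≤ r 0), c n s :=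
              Finset.sum_nonneg (fun s hs => hc n s (Finset.mem_of_mem_filter _ hs))
            simp only [hB]
            linarith
    -- |Ylim - I| ≤ ε * C1
    have hYI : |Ylim - I| ≤ ε * C1 := by
      have hAdiff : ∀ k, k + 1 ≤ M → A (r (k+1)) - A (r k) = ∫ u in (r k)..(r (k+1)), α u := by
        intro k hk
        simp only [hA]
        rw [intervalIntegral.integral_interval_sub_left
          (hαint 0 (r (k+1)) (by constructor <;> simp [le_refl, hT.le]) (hrmem _ hk))
          (hαint 0 (r k) (by constructor <;> simp [le_refl, hT.le]) (hrmem _ (le_trans (Nat.le_succ k) hk)))]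
      have hIsum : I = ∑ k ∈ Finset.range M, ∫ u in (r k)..(r (k+1)), g u * α u := by
        rw [hI]
        rw [intervalIntegral.sum_integral_adjacent_intervals (a := r) (n := M)
          (fun k hk => hgαint (r k) (r (k+1)) (hrmem _ (le_of_lt hk)) (hrmem _ hk))]
        rw [hr0, hrM]
      have hA0 : A (r 0) = 0 := by rw [hr0]; simp [hA]
      have hC1sum : C1 = ∑ k ∈ Finset.range M, ∫ u in (r k)..(r (k+1)), |α u| := by
        rw [hC1]
        rw [intervalIntegral.sum_integral_adjacent_intervals (a := r) (n := M)
          (fun k hk => ((hα.mono (hIcc_sub _ _ (hrmem _ (le_of_lt hk)) (hrmem _ hk))).abs).intervalIntegrable)]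
        rw [hr0, hrM]
      rw [hYlim, hA0, hIsum]
      rw [mul_zero, zero_add]
      rw [← Finset.sum_sub_distrib]
      calc |∑ k ∈ Finset.range M, (g (r (k+1)) * (A (r (k+1)) - A (r k))
                - ∫ u in (r k)..(r (k+1)), g u * α u)|
          ≤ ∑ k ∈ Finset.range M, |g (r (k+1)) * (A (r (k+1)) - A (r k))
                - ∫ u in (r k)..(r (k+1)), g u * α u| := Finset.abs_sum_le_sum_abs _ _
        _ ≤ ∑ k ∈ Finset.range M, ε * ∫ u in (r k)..(r (k+1)), |α u| := by
            apply Finset.sum_le_sum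
            intro k hk
            have hk' : k + 1 ≤ M := Finset.mem_range.1 hk
            have hkmem := hrmem _ (le_trans (Nat.le_succ k) hk')
            have hk1mem := hrmem _ hk'
            rw [hAdiff k hk']
            have hgα : IntervalIntegrable (fun u => g u * α u) MeasureTheory.volume (r k) (r (k+1)) :=
              hgαint _ _ hkmem hk1mem
            have hαk : IntervalIntegrable α MeasureTheory.volume (r k) (r (k+1)) :=
              hαint _ _ hkmem hk1mem
            have hconst : g (r (k+1)) * ∫ u in (r k)..(r (k+1)), α u
                = ∫ u in (r k)..(r (k+1)), g (r (k+1)) * α u := by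
              rw [intervalIntegral.integral_const_mul]
            rw [hconst, ← intervalIntegral.integral_sub (by
              exact (intervalIntegrable_const (c := g (r (k+1)))).mul_continuousOn
                (hα.mono (hIcc_sub _ _ hkmem hk1mem)) |>.mono_set (by rfl)) hgα]
            calc |∫ u in (r k)..(r (k+1)), (g (r (k+1)) * α u - g u * α u)|
                ≤ ∫ u in (r k)..(r (k+1)), |g (r (k+1)) * α u - g u * α u| := by
                  apply intervalIntegral.abs_integral_le_integral_abs (hrmono k)
              _ ≤ ∫ u in (r k)..(r (k+1)), ε * |α u| := by
                  apply intervalIntegral.integral_mono_on (hrmono k)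
                  · exact ((continuousOn_const.mul (hα.mono (hIcc_sub _ _ hkmem hk1mem))).sub
                      ((hg.mono (hIcc_sub _ _ hkmem hk1mem)).mul
                        (hα.mono (hIcc_sub _ _ hkmem hk1mem)))).abs.intervalIntegrable
                  · exact (continuousOn_const.mul
                      (hα.mono (hIcc_sub _ _ hkmem hk1mem)).abs).intervalIntegrable
                  · intro u hu
                    have huIcc : u ∈ Set.Icc (0:ℝ) T :=
                      ⟨le_trans hkmem.1 hu.1, le_trans hu.2 hk1mem.2⟩
                    have : g (r (k+1)) * α u - g u * α u = (g (r (k+1)) - g u) * α u := by ring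
                    rw [this, abs_mul]
                    apply mul_le_mul_of_nonneg_right _ (abs_nonneg _)
                    apply hgδ _ hk1mem _ huIcc
                    have h1 := hu.1
                    have h2 := hu.2
                    have := hrdiff k
                    rw [abs_sub_lt_iff]
                    constructor <;> linarith [hstep]
              _ = ε * ∫ u in (r k)..(r (k+1)), |α u| := by
                  rw [intervalIntegral.integral_const_mul]
        _ = ε * C1 := by rw [hC1sum, Finset.mul_sum]
    -- finish: eventually bounds
    have hBt := hconv t ⟨ht0, htT⟩
    have hBev : ∀ᶠ n in atTop, B n t ≤ C0 := by
      have : ∀ᶠ n in atTop, |B n t - A t| < 1 := by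
        have := Metric.tendsto_atTop.1 hBt 1 one_pos
        obtain ⟨N, hN⟩ := this
        exact eventually_atTop.2 ⟨N, fun n hn => by
          have := hN n hn; rwa [Real.dist_eq] at this⟩
      filter_upwards [this] with n hn
      have h1 : B n t - A t ≤ |B n t - A t| := le_abs_self _
      have h2 : A t ≤ |A t| := le_abs_self _
      simp only [hC0]; linarith
    have hYev : ∀ᶠ n in atTop, |Y n - Ylim| ≤ ε := by
      have := Metric.tendsto_atTop.1 hYtend ε hε
      obtain ⟨N, hN⟩ := this
      exact eventually_atTop.2 ⟨N, fun n hn => le_of_lt (by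
        have := hN n hn; rwa [Real.dist_eq] at this)⟩
    filter_upwards [hBev, hYev] with n hB1 hY1
    have h1 := hXY n
    have hε' := le_of_lt hε
    have hBtnn : 0 ≤ B n t :=
      Finset.sum_nonneg (fun s hs => hc n s (Finset.mem_of_mem_filter _ hs))
    calc |(∑ s ∈ (P n).filter (fun s => s ≤ t), g s * c n s) - I|
        ≤ |(∑ s ∈ (P n).filter (fun s => s ≤ t), g s * c n s) - Y n| + |Y n - Ylim| + |Ylim - I| := by
          have := abs_sub_le (∑ s ∈ (P n).filter (fun s => s ≤ t), g s * c n s) (Y n) I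
          have h2 := abs_sub_le (Y n) Ylim I
          linarith
      _ ≤ ε * B n t + ε + ε * C1 := by
          have : ε * B n t ≤ ε * C0 := by
            exact mul_le_mul_of_nonneg_left hB1 hε'
          linarith [h1, hY1, hYI]
      _ ≤ ε * (C0 + C1 + 1) := by
          have : ε * B n t ≤ ε * C0 := mul_le_mul_of_nonneg_left hB1 hε'
          nlinarith
  -- conclude
  apply tendsto_of_abs_le_eventually
  intro ε hε
  have hCpos : 0 < C0 + C1 + 1 := by
    have : (0:ℝ) ≤ |A t| := abs_nonneg _
    simp only [hC0]; linarith
  have := main (ε / (C0 + C1 + 1)) (by positivity)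
  filter_upwards [this] with n hn
  calc |(∑ s ∈ (P n).filter (fun s => s ≤ t), g s * c n s) - I|
      ≤ (ε / (C0 + C1 + 1)) * (C0 + C1 + 1) := hn
    _ = ε := by field_simp

lemma weighted_polar_tendsto {T : ℝ} (hT : 0 < T) (P : ℕ → Finset ℝ)
    (hPIcc : ∀ n, ↑(P n) ⊆ Set.Icc (0 : ℝ) T)
    (e f : ℕ → ℝ → ℝ)
    (αii αjj αij : ℝ → ℝ)
    (hαii : ContinuousOn αii (Set.Icc 0 T)) (hαjj : ContinuousOn αjj (Set.Icc 0 T))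
    (hαij : ContinuousOn αij (Set.Icc 0 T))
    (hii : ∀ r ∈ Set.Icc (0:ℝ) T, Tendsto (fun n => ∑ s ∈ (P n).filter (fun s => s ≤ r),
        (e n s)^2) atTop (𝓝 (∫ u in (0:ℝ)..r, αii u)))
    (hjj : ∀ r ∈ Set.Icc (0:ℝ) T, Tendsto (fun n => ∑ s ∈ (P n).filter (fun s => s ≤ r),
        (f n s)^2) atTop (𝓝 (∫ u in (0:ℝ)..r, αjj u)))
    (hij : ∀ r ∈ Set.Icc (0:ℝ) T, Tendsto (fun n => ∑ s ∈ (P n).filter (fun s => s ≤ r),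
        (e n s) * (f n s)) atTop (𝓝 (∫ u in (0:ℝ)..r, αij u)))
    (g : ℝ → ℝ) (hg : ContinuousOn g (Set.Icc 0 T))
    {t : ℝ} (ht : t ∈ Set.Icc (0:ℝ) T) :
    Tendsto (fun n => ∑ s ∈ (P n).filter (fun s => s ≤ t), g s * (e n s * f n s)) atTop
      (𝓝 (∫ u in (0:ℝ)..t, g u * αij u)) := by
  have hIcc_sub : ∀ r : ℝ, r ∈ Set.Icc (0:ℝ) T → Set.uIcc (0:ℝ) r ⊆ Set.Icc (0:ℝ) T := by
    intro r hr
    exact Set.uIcc_subset_Icc ⟨le_refl 0, hT.le⟩ hr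
  have hint : ∀ (β : ℝ → ℝ), ContinuousOn β (Set.Icc 0 T) → ∀ r ∈ Set.Icc (0:ℝ) T,
      IntervalIntegrable β MeasureTheory.volume 0 r := fun β hβ r hr =>
    (hβ.mono (hIcc_sub r hr)).intervalIntegrable
  set αp : ℝ → ℝ := fun u => αii u + 2 * αij u + αjj u with hαp
  set αm : ℝ → ℝ := fun u => αii u - 2 * αij u + αjj u with hαm
  have hαpc : ContinuousOn αp (Set.Icc 0 T) := by
    apply (hαii.add ((continuousOn_const.mul hαij))).add hαjj
  have hαmc : ContinuousOn αm (Set.Icc 0 T) := by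
    apply (hαii.sub ((continuousOn_const.mul hαij))).add hαjj
  have hWp := weighted_qv_tendsto hT P hPIcc (fun n s => (e n s + f n s)^2)
    (fun n s _ => sq_nonneg _) αp hαpc (by
      intro r hr
      have : ∀ n, ∑ s ∈ (P n).filter (fun s => s ≤ r), (e n s + f n s)^2
          = (∑ s ∈ (P n).filter (fun s => s ≤ r), (e n s)^2)
            + 2 * (∑ s ∈ (P n).filter (fun s => s ≤ r), e n s * f n s)
            + (∑ s ∈ (P n).filter (fun s => s ≤ r), (f n s)^2) := by
        intro n
        rw [Finset.mul_sum, ← Finset.sum_add_distrib, ← Finset.sum_add_distrib]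
        exact Finset.sum_congr rfl fun s _ => by ring
      simp only [this]
      have hlim : (∫ u in (0:ℝ)..r, αp u)
          = (∫ u in (0:ℝ)..r, αii u) + 2 * (∫ u in (0:ℝ)..r, αij u)
            + (∫ u in (0:ℝ)..r, αjj u) := by
        rw [← intervalIntegral.integral_const_mul,
          ← intervalIntegral.integral_add (hint _ hαii r hr)
            ((hint _ hαij r hr).const_mul 2),
          ← intervalIntegral.integral_add
            ((hint _ hαii r hr).add ((hint _ hαij r hr).const_mul 2)) (hint _ hαjj r hr)]
      rw [hlim]
      exact ((hii r hr).add (((hij r hr).const_mul 2))).add (hjj r hr)) g hg ht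
  have hWm := weighted_qv_tendsto hT P hPIcc (fun n s => (e n s - f n s)^2)
    (fun n s _ => sq_nonneg _) αm hαmc (by
      intro r hr
      have : ∀ n, ∑ s ∈ (P n).filter (fun s => s ≤ r), (e n s - f n s)^2
          = (∑ s ∈ (P n).filter (fun s => s ≤ r), (e n s)^2)
            - 2 * (∑ s ∈ (P n).filter (fun s => s ≤ r), e n s * f n s)
            + (∑ s ∈ (P n).filter (fun s => s ≤ r), (f n s)^2) := by
        intro n
        rw [Finset.mul_sum, ← Finset.sum_sub_distrib, ← Finset.sum_add_distrib]
        exact Finset.sum_congr rfl fun s _ => by ring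
      simp only [this]
      have hlim : (∫ u in (0:ℝ)..r, αm u)
          = (∫ u in (0:ℝ)..r, αii u) - 2 * (∫ u in (0:ℝ)..r, αij u)
            + (∫ u in (0:ℝ)..r, αjj u) := by
        rw [← intervalIntegral.integral_const_mul,
          ← intervalIntegral.integral_sub (hint _ hαii r hr)
            ((hint _ hαij r hr).const_mul 2),
          ← intervalIntegral.integral_add
            ((hint _ hαii r hr).sub ((hint _ hαij r hr).const_mul 2)) (hint _ hαjj r hr)]
      rw [hlim]
      exact ((hii r hr).sub (((hij r hr).const_mul 2))).add (hjj r hr)) g hg ht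
  have hkey := (hWp.sub hWm).div_const 4
  have heq : ∀ n, ((∑ s ∈ (P n).filter (fun s => s ≤ t), g s * (e n s + f n s)^2)
      - ∑ s ∈ (P n).filter (fun s => s ≤ t), g s * (e n s - f n s)^2) / 4
        = ∑ s ∈ (P n).filter (fun s => s ≤ t), g s * (e n s * f n s) := by
    intro n
    rw [← Finset.sum_sub_distrib]
    rw [Finset.sum_div]
    exact Finset.sum_congr rfl fun s _ => by ring
  have hval : ((∫ u in (0:ℝ)..t, g u * αp u) - ∫ u in (0:ℝ)..t, g u * αm u) / 4
      = ∫ u in (0:ℝ)..t, g u * αij u := by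
    rw [← intervalIntegral.integral_sub (f := fun u => g u * αp u) (g := fun u => g u * αm u)
      (((hg.mono (hIcc_sub t ht)).mul (hαpc.mono (hIcc_sub t ht))).intervalIntegrable :
        IntervalIntegrable (fun u => g u * αp u) MeasureTheory.volume 0 t)
      (((hg.mono (hIcc_sub t ht)).mul (hαmc.mono (hIcc_sub t ht))).intervalIntegrable :
        IntervalIntegrable (fun u => g u * αm u) MeasureTheory.volume 0 t)]
    rw [div_eq_iff (by norm_num : (4:ℝ) ≠ 0), ← intervalIntegral.integral_mul_const]
    apply intervalIntegral.integral_congr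
    intro u hu
    simp only [hαp, hαm]
    ring
  rw [hval] at hkey
  exact Tendsto.congr (fun n => heq n) hkey





lemma pi_single_decomp {d : ℕ} (u : Fin d → ℝ) : u = ∑ k, u k • (Pi.single k (1:ℝ) : Fin d → ℝ) := by
  funext j
  rw [Finset.sum_apply]
  simp [Pi.single_apply, mul_comm]

lemma clm_apply_eq_sum {d : ℕ} (L : (Fin d → ℝ) →L[ℝ] ℝ) (u : Fin d → ℝ) :
    L u = ∑ k, u k * L (Pi.single k 1) := by
  conv_lhs => rw [pi_single_decomp u]
  rw [map_sum]
  exact Finset.sum_congr rfl fun k _ => by rw [map_smul]; rfl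

lemma fderiv_apply_eq_sum {d : ℕ} (F : (Fin d → ℝ) → ℝ) (z u : Fin d → ℝ) :
    fderiv ℝ F z u = ∑ k, u k * fderiv ℝ F z (Pi.single k 1) :=
  clm_apply_eq_sum _ u

lemma hasDerivAt_line {d : ℕ} (x u : Fin d → ℝ) (r : ℝ) :
    HasDerivAt (fun ρ : ℝ => x + ρ • u) u r := by
  have h1 : HasDerivAt (fun ρ : ℝ => ρ • u) ((1:ℝ) • u) r := (hasDerivAt_id r).smul_const u
  rw [one_smul] at h1
  exact h1.const_add x

lemma comp_line_hasDerivAt {d : ℕ} (F : (Fin d → ℝ) → ℝ) (x u : Fin d → ℝ) (r : ℝ)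
    (hF : DifferentiableAt ℝ F (x + r • u)) :
    HasDerivAt (fun ρ : ℝ => F (x + ρ • u)) (∑ k, u k * pd1 F k (x + r • u)) r := by
  have h := hF.hasFDerivAt.comp_hasDerivAt r (hasDerivAt_line x u r)
  have : (fderiv ℝ F (x + r • u)) u = ∑ k, u k * pd1 F k (x + r • u) := by
    rw [fderiv_apply_eq_sum]; rfl
  rw [← this]
  exact h

lemma taylor2_bound {d : ℕ} (D : Set (Fin d → ℝ)) (w : (Fin d → ℝ) → ℝ)
    (x u : Fin d → ℝ)
    (hseg : ∀ r ∈ Set.Icc (0:ℝ) 1, x + r • u ∈ D)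
    (hdiff : ∀ y ∈ D, DifferentiableAt ℝ w y)
    (hdiff2 : ∀ y ∈ D, ∀ j, DifferentiableAt ℝ (pd1 w j) y)
    (ε : ℝ) (hε : 0 ≤ ε)
    (hosc : ∀ r ∈ Set.Icc (0:ℝ) 1, ∀ i j, |pd2 w i j (x + r • u) - pd2 w i j x| ≤ ε) :
    |w (x + u) - w x - (∑ k, pd1 w k x * u k)
        - (1/2) * ∑ i, ∑ j, pd2 w i j x * u i * u j|
      ≤ ε * (∑ i, |u i|)^2 := by
  classical
  set M : ℝ := ε * (∑ i, |u i|)^2 with hM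
  have hMnn : 0 ≤ M := by positivity
  set h : ℝ → ℝ := fun r => w (x + r • u) with hh
  set h1 : ℝ → ℝ := fun r => ∑ k, u k * pd1 w k (x + r • u) with hh1
  set h2 : ℝ → ℝ := fun r => ∑ k, u k * ∑ i, u i * pd2 w i k (x + r • u) with hh2
  have ha : ∀ r ∈ Set.Icc (0:ℝ) 1, HasDerivAt h (h1 r) r := fun r hr =>
    comp_line_hasDerivAt w x u r (hdiff _ (hseg r hr))
  have hb : ∀ r ∈ Set.Icc (0:ℝ) 1, HasDerivAt h1 (h2 r) r := by
    intro r hr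
    apply HasDerivAt.fun_sum
    intro k _
    exact (comp_line_hasDerivAt (pd1 w k) x u r
      (hdiff2 _ (hseg r hr) k)).const_mul (u k)
  have hc : ∀ r ∈ Set.Icc (0:ℝ) 1, |h2 r - h2 0| ≤ M := by
    intro r hr
    have h0mem : x + (0:ℝ) • u = x := by rw [zero_smul, add_zero]
    calc |h2 r - h2 0|
        = |∑ k, (u k * ∑ i, u i * pd2 w i k (x + r • u)
            - u k * ∑ i, u i * pd2 w i k (x + (0:ℝ) • u))| := by
          rw [← Finset.sum_sub_distrib]
      _ ≤ ∑ k, |u k * ∑ i, u i * pd2 w i k (x + r • u)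
            - u k * ∑ i, u i * pd2 w i k (x + (0:ℝ) • u)| := Finset.abs_sum_le_sum_abs _ _
      _ ≤ ∑ k, |u k| * (ε * ∑ i, |u i|) := by
          apply Finset.sum_le_sum
          intro k _
          rw [← mul_sub, abs_mul]
          apply mul_le_mul_of_nonneg_left _ (abs_nonneg _)
          rw [← Finset.sum_sub_distrib]
          calc |∑ i, (u i * pd2 w i k (x + r • u) - u i * pd2 w i k (x + (0:ℝ) • u))|
              ≤ ∑ i, |u i * pd2 w i k (x + r • u) - u i * pd2 w i k (x + (0:ℝ) • u)| :=
                Finset.abs_sum_le_sum_abs _ _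
            _ ≤ ∑ i, |u i| * ε := by
                apply Finset.sum_le_sum
                intro i _
                rw [← mul_sub, abs_mul]
                apply mul_le_mul_of_nonneg_left _ (abs_nonneg _)
                rw [h0mem]
                exact hosc r hr i k
            _ = ε * ∑ i, |u i| := by rw [← Finset.sum_mul]; ring
      _ = M := by
          rw [hM, ← Finset.sum_mul]
          ring
  -- ψ and φ
  set ψ : ℝ → ℝ := fun r => h1 r - r * h2 0 with hψ
  have hψd : ∀ r ∈ Set.Icc (0:ℝ) 1, HasDerivWithinAt ψ (h2 r - h2 0) (Set.Icc 0 1) r := by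
    intro r hr
    exact ((hb r hr).sub (((hasDerivAt_id r).mul_const (h2 0)).congr_deriv
      (by ring))).hasDerivWithinAt
  have hψbound : ∀ r ∈ Set.Icc (0:ℝ) 1, |ψ r - ψ 0| ≤ M := by
    intro r hr
    have := Convex.norm_image_sub_le_of_norm_hasDerivWithin_le hψd
      (fun r hr => by rw [Real.norm_eq_abs]; exact hc r hr) (convex_Icc 0 1)
      (Set.left_mem_Icc.2 zero_le_one) hr
    rw [Real.norm_eq_abs, Real.norm_eq_abs] at this
    calc |ψ r - ψ 0| ≤ M * |r - 0| := this
      _ ≤ M * 1 := by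
          apply mul_le_mul_of_nonneg_left _ hMnn
          rw [sub_zero, abs_of_nonneg hr.1]
          exact hr.2
      _ = M := mul_one M
  set φ : ℝ → ℝ := fun r => h r - h 0 - r * h1 0 - r^2 * (h2 0 / 2) with hφ
  have hφd : ∀ r ∈ Set.Icc (0:ℝ) 1, HasDerivWithinAt φ (ψ r - ψ 0) (Set.Icc 0 1) r := by
    intro r hr
    have base : HasDerivAt φ (h1 r - h1 0 - (2 * r^1) * (h2 0 / 2)) r := by
      apply HasDerivAt.sub
      apply HasDerivAt.sub
      · exact (ha r hr).sub_const (h 0) |>.congr_deriv rfl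
      · exact ((hasDerivAt_id r).mul_const (h1 0)).congr_deriv (by ring)
      · have := (hasDerivAt_pow 2 r).mul_const (h2 0 / 2)
        norm_num at this ⊢
        convert this using 1
    have : h1 r - h1 0 - (2 * r^1) * (h2 0 / 2) = ψ r - ψ 0 := by
      simp only [hψ]
      ring
    rw [this] at base
    exact base.hasDerivWithinAt
  have hφbound : |φ 1 - φ 0| ≤ M := by
    have := Convex.norm_image_sub_le_of_norm_hasDerivWithin_le hφd
      (fun r hr => by rw [Real.norm_eq_abs]; exact hψbound r hr) (convex_Icc 0 1)
      (Set.left_mem_Icc.2 zero_le_one) (Set.right_mem_Icc.2 zero_le_one)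
    rw [Real.norm_eq_abs, Real.norm_eq_abs] at this
    simpa using this
  have hφ0 : φ 0 = 0 := by simp [hφ]
  have hφ1 : φ 1 = w (x + u) - w x - (∑ k, pd1 w k x * u k)
      - (1/2) * ∑ i, ∑ j, pd2 w i j x * u i * u j := by
    simp only [hφ, hh, hh1, hh2]
    rw [one_smul, zero_smul, add_zero]
    have e1 : (∑ k, u k * pd1 w k x) = ∑ k, pd1 w k x * u k :=
      Finset.sum_congr rfl fun k _ => by ring
    have e2 : (∑ k, u k * ∑ i, u i * pd2 w i k x)
        = ∑ i, ∑ j, pd2 w i j x * u i * u j := by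
      calc (∑ k, u k * ∑ i, u i * pd2 w i k x)
          = ∑ k, ∑ i, u k * (u i * pd2 w i k x) :=
            Finset.sum_congr rfl fun k _ => Finset.mul_sum _ _ _
        _ = ∑ i, ∑ k, u k * (u i * pd2 w i k x) := Finset.sum_comm
        _ = ∑ i, ∑ j, pd2 w i j x * u i * u j :=
            Finset.sum_congr rfl fun i _ => Finset.sum_congr rfl fun k _ => by ring
    rw [e1, e2]
    ring
  rw [hφ0, sub_zero] at hφbound
  rw [← hφ1]
  exact hφbound

set_option maxHeartbeats 4000000 in
lemma master_ito {T : ℝ} (hT : 0 < T) (𝕋 : PartitionSeq T) {d : ℕ}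
    (D : Set (Fin d → ℝ))
    (S : ℝ → Fin d → ℝ) (hS : ContinuousOn S (Set.Icc 0 T))
    (hSD : ∀ u ∈ Set.Icc (0:ℝ) T, S u ∈ D)
    (C : Set (Fin d → ℝ)) (hCcomp : IsCompact C) (hCD : C ⊆ D) (hCconv : Convex ℝ C)
    (hSC : ∀ u ∈ Set.Icc (0:ℝ) T, S u ∈ C)
    (α : Fin d → Fin d → ℝ → ℝ)
    (hα : ∀ i j, ContinuousOn (α i j) (Set.Icc 0 T))
    (hcov : ∀ i j, ∀ r ∈ Set.Icc (0:ℝ) T,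
      Tendsto (fun n => covSum T 𝕋 S i j r n) atTop (𝓝 (∫ u in (0:ℝ)..r, α i j u)))
    (v : ℝ → (Fin d → ℝ) → ℝ)
    (hv_cont : ContinuousOn (fun q : ℝ × (Fin d → ℝ) => v q.1 q.2) (Set.Icc 0 T ×ˢ D))
    (hv_C12 : IsC12 (Set.Ico 0 T) D v)
    (hpde : ∀ u ∈ Set.Ioo (0:ℝ) T,
      deriv (fun τ => v τ (S u)) u + (1/2) * ∑ i, ∑ j, α i j u * pd2 (v u) i j (S u) = 0)
    {t : ℝ} (ht : t ∈ Set.Ico (0:ℝ) T) :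
    Tendsto (fun n => ∑ s ∈ (𝕋.part n).filter (fun s => s ≤ t),
        ∑ k, pd1 (v s) k (S s) * (S (succOf T (𝕋.part n) s) k - S s k)) atTop
      (𝓝 (v t (S t) - v 0 (S 0))) := by
  classical
  obtain ⟨ht0, htT⟩ := ht
  obtain ⟨gT, gX, gXX, hgTc, hgXc, hgXXc, hders⟩ := hv_C12.derivs_extend
  have hintIco : interior (Set.Ico (0:ℝ) T) = Set.Ioo 0 T := interior_Ico
  have hPIcc : ∀ n, ↑(𝕋.part n) ⊆ Set.Icc (0:ℝ) T := 𝕋.subset_Icc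
  have h0P : ∀ n, (0:ℝ) ∈ 𝕋.part n := 𝕋.zero_mem
  have hTP : ∀ n, T ∈ 𝕋.part n := 𝕋.top_mem
  set t₁ : ℝ := (t + T) / 2 with ht₁
  have htt₁ : t < t₁ := by simp only [ht₁]; linarith
  have ht₁T : t₁ < T := by simp only [ht₁]; linarith
  have ht₁0 : 0 ≤ t₁ := by simp only [ht₁]; linarith
  have hIccIco : Set.Icc (0:ℝ) t₁ ⊆ Set.Ico 0 T := fun u hu => ⟨hu.1, lt_of_le_of_lt hu.2 ht₁T⟩
  have hIccIcc : Set.Icc (0:ℝ) t₁ ⊆ Set.Icc 0 T := fun u hu => ⟨hu.1, le_trans hu.2 ht₁T.le⟩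
  have hK2comp : IsCompact (Set.Icc (0:ℝ) t₁ ×ˢ C) := isCompact_Icc.prod hCcomp
  have hK2sub : Set.Icc (0:ℝ) t₁ ×ˢ C ⊆ Set.Ico 0 T ×ˢ D := Set.prod_mono hIccIco hCD
  have htIcc : t ∈ Set.Icc (0:ℝ) T := ⟨ht0, htT.le⟩
  have hsuccIcc : ∀ n, ∀ s ∈ 𝕋.part n, succOf T (𝕋.part n) s ∈ Set.Icc (0:ℝ) T := by
    intro n s hs
    exact ⟨le_trans (hPIcc n hs).1 (le_succOf (hPIcc n) hs),
      succOf_le_of_subset (hPIcc n) hT.le s⟩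
  set σ : ℕ → ℝ := fun n => nextAfter T t (𝕋.part n) with hσdef
  have hσgt : ∀ n, t < σ n := fun n => lt_nextAfter (hPIcc n) (h0P n) (hTP n) ht0 htT
  have hσle : ∀ n, σ n ≤ T := fun n => nextAfter_le (hPIcc n) hT.le
  have hσIcc : ∀ n, σ n ∈ Set.Icc (0:ℝ) T := fun n => ⟨le_trans ht0 (hσgt n).le, hσle n⟩
  have hσtend : Tendsto σ atTop (𝓝 t) := by
    rw [Metric.tendsto_atTop]
    intro ε hε
    obtain ⟨N, hN⟩ := 𝕋.mesh_to_zero ε hε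
    refine ⟨N, fun n hn => ?_⟩
    have h1 := nextAfter_lt_add (T := T) (h0P n) ht0 (hN n hn)
    have h2 := hσgt n
    rw [Real.dist_eq, abs_of_pos (by simp only [hσdef] at *; linarith : (0:ℝ) < σ n - t)]
    simp only [hσdef] at *
    linarith
  have hσtendIn : Tendsto σ atTop (𝓝[Set.Icc (0:ℝ) T] t) :=
    tendsto_nhdsWithin_of_tendsto_nhds_of_eventually_within _ hσtend
      (Eventually.of_forall hσIcc)
  have hGc : ContinuousOn (fun u => v u (S u)) (Set.Icc 0 T) :=
    hv_cont.comp (continuousOn_id.prodMk hS) (fun u hu => ⟨hu, hSD u hu⟩)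
  have hTel : Tendsto (fun n => v (σ n) (S (σ n))) atTop (𝓝 (v t (S t))) :=
    (hGc t htIcc).tendsto.comp hσtendIn
  -- succOf at 0
  have hsucc0Icc : ∀ n, succOf T (𝕋.part n) 0 ∈ Set.Icc (0:ℝ) T :=
    fun n => hsuccIcc n 0 (h0P n)
  have hsucc0tend : Tendsto (fun n => succOf T (𝕋.part n) 0) atTop
      (𝓝[Set.Icc (0:ℝ) T] 0) := by
    apply tendsto_nhdsWithin_of_tendsto_nhds_of_eventually_within
    · rw [Metric.tendsto_atTop]
      intro ε hε
      obtain ⟨N, hN⟩ := 𝕋.mesh_to_zero ε hε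
      refine ⟨N, fun n hn => ?_⟩
      have h1 := hN n hn 0 (h0P n)
      have h2 := (hsucc0Icc n).1
      rw [Real.dist_eq, abs_of_nonneg (by linarith : (0:ℝ) ≤ succOf T (𝕋.part n) 0 - 0)]
      linarith
    · exact Eventually.of_forall hsucc0Icc
  have hΔ0 : ∀ k, Tendsto (fun n => S (succOf T (𝕋.part n) 0) k - S 0 k) atTop (𝓝 0) := by
    intro k
    have h1 : Tendsto (fun n => S (succOf T (𝕋.part n) 0)) atTop (𝓝 (S 0)) :=
      (hS 0 ⟨le_refl 0, hT.le⟩).tendsto.comp hsucc0tend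
    have h2 : Tendsto (fun n => S (succOf T (𝕋.part n) 0) k) atTop (𝓝 (S 0 k)) :=
      ((continuous_apply k).tendsto _).comp h1
    simpa using h2.sub_const (S 0 k)
  -- time-direction facts
  have hdiff_time : ∀ u ∈ Set.Ioo (0:ℝ) T, ∀ x ∈ D,
      HasDerivAt (fun τ => v τ x) (gT (u, x)) u := by
    intro u hu x hx
    have hjoint := hv_C12.diff u (by rw [hintIco]; exact hu) x hx
    have hmap : DifferentiableAt ℝ (fun τ : ℝ => ((τ, x) : ℝ × (Fin d → ℝ))) u :=
      differentiableAt_id.prodMk (differentiableAt_const x)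
    have hcomp : DifferentiableAt ℝ (fun τ => v τ x) u := by
      have := hjoint.comp u hmap; exact this
    have h3 := hcomp.hasDerivAt
    rwa [← (hders u (by rw [hintIco]; exact hu) x hx).1] at h3
  have hvx_cont : ∀ x ∈ D, ContinuousOn (fun τ => v τ x) (Set.Icc 0 T) := by
    intro x hx
    exact hv_cont.comp (continuousOn_id.prodMk continuousOn_const) (fun u hu => ⟨hu, hx⟩)
  have hgTx_cont : ∀ x ∈ D, ContinuousOn (fun u => gT (u, x)) (Set.Icc 0 t₁) := by
    intro x hx
    exact hgTc.comp (continuousOn_id.prodMk continuousOn_const)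
      (fun u hu => ⟨hIccIco hu, hx⟩)
  have hG1c : ContinuousOn (fun u => gT (u, S u)) (Set.Icc 0 t₁) :=
    hgTc.comp (continuousOn_id.prodMk (hS.mono hIccIcc))
      (fun u hu => ⟨hIccIco hu, hSD u (hIccIcc hu)⟩)
  obtain ⟨CG, hCG⟩ := isCompact_Icc.exists_bound_of_continuousOn hG1c
  have hCG0 : 0 ≤ CG := le_trans (norm_nonneg _) (hCG 0 ⟨le_refl 0, ht₁0⟩)
  set Itime : ℝ := ∫ u in (0:ℝ)..t, gT (u, S u) with hItimedef
  set H : ℝ → ℝ := fun r => ∫ u in (0:ℝ)..r, gT (u, S u) with hHdef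
  have hH0 : H 0 = 0 := intervalIntegral.integral_same
  have hHint : ∀ r ∈ Set.Icc (0:ℝ) t₁,
      IntervalIntegrable (fun u => gT (u, S u)) MeasureTheory.volume 0 r := by
    intro r hr
    exact (hG1c.mono (Set.uIcc_subset_Icc ⟨le_refl 0, ht₁0⟩ hr)).intervalIntegrable
  -- telescoping
  have htelescope : ∀ (g : ℝ → ℝ) (n : ℕ),
      ∑ s ∈ (𝕋.part n).filter (fun s => s ≤ t), (g (succOf T (𝕋.part n) s) - g s)
        = g (σ n) - g 0 := fun g n =>
    sum_telescope_filter (hPIcc n) (h0P n) (hTP n) ht0 htT g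
  -- uniform continuity of S
  have hSuc : ∀ ε > 0, ∃ δ > 0, ∀ a ∈ Set.Icc (0:ℝ) T, ∀ b ∈ Set.Icc (0:ℝ) T,
      |a - b| < δ → dist (S a) (S b) < ε := by
    intro ε hε
    have h1 := isCompact_Icc.uniformContinuousOn_of_continuous hS
    rw [Metric.uniformContinuousOn_iff] at h1
    obtain ⟨δ, hδ, hδ'⟩ := h1 ε hε
    exact ⟨δ, hδ, fun a ha b hb hab => hδ' a ha b hb (by rwa [Real.dist_eq])⟩
  set Tsum : ℕ → ℝ := fun n => ∑ s ∈ (𝕋.part n).filter (fun s => s ≤ t),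
    (v (succOf T (𝕋.part n) s) (S (succOf T (𝕋.part n) s))
      - v s (S (succOf T (𝕋.part n) s))) with hTsumdef
  ------------------------------------------------------------------
  -- (L-Time)
  ------------------------------------------------------------------
  have hTime : Tendsto Tsum atTop (𝓝 Itime) := by
    apply tendsto_of_abs_le_eventually
    intro ε' hε'
    set ε : ℝ := ε' / (T + CG + 1) with hεdef
    have hεpos : 0 < ε := div_pos hε' (by linarith)
    have hgTuc : ∃ δ > 0, ∀ p ∈ Set.Icc (0:ℝ) t₁ ×ˢ C, ∀ q ∈ Set.Icc (0:ℝ) t₁ ×ˢ C,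
        dist p q < δ → |gT p - gT q| ≤ ε := by
      have h1 := hK2comp.uniformContinuousOn_of_continuous (hgTc.mono hK2sub)
      rw [Metric.uniformContinuousOn_iff] at h1
      obtain ⟨δ, hδ, hδ'⟩ := h1 ε hεpos
      exact ⟨δ, hδ, fun p hp q hq hpq => le_of_lt (by
        rw [← Real.dist_eq]; exact hδ' p hp q hq hpq)⟩
    obtain ⟨δ2, hδ2, hgTδ⟩ := hgTuc
    obtain ⟨δ3, hδ3, hSδ⟩ := hSuc δ2 hδ2
    set δ' : ℝ := min δ3 (min (t₁ - t) ε) with hδ'def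
    have hδ'pos : 0 < δ' := lt_min hδ3 (lt_min (by linarith) hεpos)
    have hδ'3 : δ' ≤ δ3 := min_le_left _ _
    have hδ't₁ : δ' ≤ t₁ - t := le_trans (min_le_right _ _) (min_le_left _ _)
    have hδ'ε : δ' ≤ ε := le_trans (min_le_right _ _) (min_le_right _ _)
    obtain ⟨N, hN⟩ := 𝕋.mesh_to_zero δ' hδ'pos
    rw [eventually_atTop]
    refine ⟨N, fun n hn => ?_⟩
    have hmesh : ∀ s ∈ 𝕋.part n, succOf T (𝕋.part n) s - s < δ' := hN n hn
    have hσlt₁ : σ n < t₁ := by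
      have h1 := nextAfter_lt_add (T := T) (h0P n) ht0 hmesh
      simp only [hσdef]
      linarith
    have hσεlt : σ n - t < ε := by
      have h1 := nextAfter_lt_add (T := T) (h0P n) ht0 hmesh
      simp only [hσdef]
      linarith
    -- per-term bound
    have hterm : ∀ s ∈ (𝕋.part n).filter (fun u => u ≤ t),
        |(v (succOf T (𝕋.part n) s) (S (succOf T (𝕋.part n) s))
            - v s (S (succOf T (𝕋.part n) s)))
          - (H (succOf T (𝕋.part n) s) - H s)| ≤ ε * (succOf T (𝕋.part n) s - s) := by
      intro s hs
      obtain ⟨hsP, hst⟩ := Finset.mem_filter.1 hs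
      have hs0 : 0 ≤ s := (hPIcc n hsP).1
      have hss' : s ≤ succOf T (𝕋.part n) s := le_succOf (hPIcc n) hsP
      have hs't₁ : succOf T (𝕋.part n) s ≤ t₁ := by
        have := hmesh s hsP
        linarith
      have hs'Icc : succOf T (𝕋.part n) s ∈ Set.Icc (0:ℝ) T := hsuccIcc n s hsP
      have hsIcc₁ : s ∈ Set.Icc (0:ℝ) t₁ := ⟨hs0, le_trans hst htt₁.le⟩
      have hs'Icc₁ : succOf T (𝕋.part n) s ∈ Set.Icc (0:ℝ) t₁ := ⟨hs'Icc.1, hs't₁⟩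
      have hSs'D : S (succOf T (𝕋.part n) s) ∈ D := hSD _ hs'Icc
      have huIccsub : Set.uIcc s (succOf T (𝕋.part n) s) ⊆ Set.Icc (0:ℝ) t₁ :=
        Set.uIcc_subset_Icc hsIcc₁ hs'Icc₁
      have hftc : v (succOf T (𝕋.part n) s) (S (succOf T (𝕋.part n) s))
          - v s (S (succOf T (𝕋.part n) s))
            = ∫ u in s..(succOf T (𝕋.part n) s), gT (u, S (succOf T (𝕋.part n) s)) := by
        rw [intervalIntegral.integral_eq_sub_of_hasDeriv_right_of_le hss'
          ((hvx_cont _ hSs'D).mono (Set.Icc_subset_Icc hs0 hs'Icc.2))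
          (fun u hu => (hdiff_time u ⟨lt_of_le_of_lt hs0 hu.1,
            lt_of_lt_of_le hu.2 (le_trans hs't₁ ht₁T.le)⟩ _ hSs'D).hasDerivWithinAt)
          (((hgTx_cont _ hSs'D).mono huIccsub).intervalIntegrable)]
      have hHdiff : H (succOf T (𝕋.part n) s) - H s
          = ∫ u in s..(succOf T (𝕋.part n) s), gT (u, S u) := by
        simp only [hHdef]
        rw [intervalIntegral.integral_interval_sub_left (hHint _ hs'Icc₁) (hHint _ hsIcc₁)]
      rw [hftc, hHdiff, ← intervalIntegral.integral_sub
        (((hgTx_cont _ hSs'D).mono huIccsub).intervalIntegrable)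
        ((hG1c.mono huIccsub).intervalIntegrable)]
      have hbd : ∀ u ∈ Set.uIoc s (succOf T (𝕋.part n) s),
          ‖gT (u, S (succOf T (𝕋.part n) s)) - gT (u, S u)‖ ≤ ε := by
        intro u hu
        rw [Set.uIoc_of_le hss'] at hu
        have huIcc₁ : u ∈ Set.Icc (0:ℝ) t₁ := ⟨le_trans hs0 hu.1.le, le_trans hu.2 hs't₁⟩
        have huIcc : u ∈ Set.Icc (0:ℝ) T := hIccIcc huIcc₁
        have hdistS : dist (S (succOf T (𝕋.part n) s)) (S u) < δ2 := by
          apply hSδ _ hs'Icc _ huIcc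
          rw [abs_sub_lt_iff]
          have := hmesh s hsP
          constructor <;> [linarith [hu.1, hδ'3]; linarith [hu.1, hu.2, hδ'pos]]
        rw [Real.norm_eq_abs]
        apply hgTδ (u, S (succOf T (𝕋.part n) s)) ⟨huIcc₁, hSC _ hs'Icc⟩
          (u, S u) ⟨huIcc₁, hSC u huIcc⟩
        rw [Prod.dist_eq]
        simp only [dist_self]
        rw [max_eq_right dist_nonneg]
        exact hdistS
      calc ‖∫ u in s..(succOf T (𝕋.part n) s),
              (gT (u, S (succOf T (𝕋.part n) s)) - gT (u, S u))‖
          ≤ ε * |succOf T (𝕋.part n) s - s| :=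
            intervalIntegral.norm_integral_le_of_norm_le_const hbd
        _ = ε * (succOf T (𝕋.part n) s - s) := by
            rw [abs_of_nonneg (by linarith)]
    -- sum the bounds
    have hsum1 : |Tsum n - H (σ n)| ≤ ε * T := by
      have he1 : Tsum n - H (σ n)
          = ∑ s ∈ (𝕋.part n).filter (fun u => u ≤ t),
              ((v (succOf T (𝕋.part n) s) (S (succOf T (𝕋.part n) s))
                - v s (S (succOf T (𝕋.part n) s)))
                - (H (succOf T (𝕋.part n) s) - H s)) := by
        rw [Finset.sum_sub_distrib, htelescope H n, hH0]
        simp only [hTsumdef]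
        ring
      rw [he1]
      calc |∑ s ∈ (𝕋.part n).filter (fun u => u ≤ t), _|
          ≤ ∑ s ∈ (𝕋.part n).filter (fun u => u ≤ t),
              |(v (succOf T (𝕋.part n) s) (S (succOf T (𝕋.part n) s))
                - v s (S (succOf T (𝕋.part n) s)))
                - (H (succOf T (𝕋.part n) s) - H s)| := Finset.abs_sum_le_sum_abs _ _
        _ ≤ ∑ s ∈ (𝕋.part n).filter (fun u => u ≤ t),
              ε * (succOf T (𝕋.part n) s - s) := Finset.sum_le_sum hterm
        _ = ε * (σ n - 0) := by
            rw [← Finset.mul_sum, htelescope (fun r => r) n]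
        _ ≤ ε * T := by
            apply mul_le_mul_of_nonneg_left _ hεpos.le
            have := hσle n
            linarith
    have hsum2 : |H (σ n) - Itime| ≤ CG * ε := by
      have hσIcc₁ : σ n ∈ Set.Icc (0:ℝ) t₁ := ⟨(hσIcc n).1, hσlt₁.le⟩
      have htIcc₁ : t ∈ Set.Icc (0:ℝ) t₁ := ⟨ht0, htt₁.le⟩
      have he2 : H (σ n) - Itime = ∫ u in t..(σ n), gT (u, S u) := by
        simp only [hHdef, hItimedef]
        rw [intervalIntegral.integral_interval_sub_left (hHint _ hσIcc₁) (hHint _ htIcc₁)]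
      rw [he2]
      have hbd : ∀ u ∈ Set.uIoc t (σ n), ‖gT (u, S u)‖ ≤ CG := by
        intro u hu
        rw [Set.uIoc_of_le (hσgt n).le] at hu
        exact hCG u ⟨le_trans ht0 hu.1.le, le_trans hu.2 hσlt₁.le⟩
      calc ‖∫ u in t..(σ n), gT (u, S u)‖
          ≤ CG * |σ n - t| := intervalIntegral.norm_integral_le_of_norm_le_const hbd
        _ ≤ CG * ε := by
            apply mul_le_mul_of_nonneg_left _ hCG0
            rw [abs_of_pos (by linarith [hσgt n])]
            exact hσεlt.le
    calc |Tsum n - Itime| ≤ |Tsum n - H (σ n)| + |H (σ n) - Itime| := abs_sub_le _ _ _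
      _ ≤ ε * T + CG * ε := add_le_add hsum1 hsum2
      _ ≤ ε * (T + CG + 1) := by nlinarith
      _ = ε' := by
          simp only [hεdef]
          field_simp
  ------------------------------------------------------------------
  -- (L-Quad)
  ------------------------------------------------------------------
  set gq : Fin d → Fin d → ℝ → ℝ :=
    fun i j u => gXX i j (min u t₁, S (min u t₁)) with hgqdef
  have hminc : ContinuousOn (fun u : ℝ => min u t₁) (Set.Icc 0 T) :=
    (continuous_id.min continuous_const).continuousOn
  have hminmaps : ∀ u ∈ Set.Icc (0:ℝ) T, min u t₁ ∈ Set.Icc (0:ℝ) t₁ :=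
    fun u hu => ⟨le_min hu.1 ht₁0, min_le_right _ _⟩
  have hgXXSc : ∀ i j, ContinuousOn (fun w => gXX i j (w, S w)) (Set.Icc 0 t₁) :=
    fun i j => (hgXXc i j).comp (continuousOn_id.prodMk (hS.mono hIccIcc))
      (fun u hu => ⟨hIccIco hu, hSD u (hIccIcc hu)⟩)
  have hgqc : ∀ i j, ContinuousOn (gq i j) (Set.Icc 0 T) :=
    fun i j => (hgXXSc i j).comp hminc hminmaps
  have hgq_eq : ∀ i j, ∀ u : ℝ, u ≤ t → gq i j u = gXX i j (u, S u) := by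
    intro i j u hu
    simp only [hgqdef]
    rw [min_eq_left (le_trans hu htt₁.le)]
  have hpd2g : ∀ s : ℝ, 0 < s → s ≤ t → ∀ i j,
      pd2 (v s) i j (S s) = gXX i j (s, S s) := by
    intro s hs0 hst i j
    have hsIoo : s ∈ interior (Set.Ico (0:ℝ) T) := by
      rw [hintIco]; exact ⟨hs0, lt_of_le_of_lt hst htT⟩
    exact ((hders s hsIoo (S s) (hSD s ⟨hs0.le, le_trans hst htT.le⟩)).2.2 i j).symm
  have hii : ∀ i : Fin d, ∀ r ∈ Set.Icc (0:ℝ) T,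
      Tendsto (fun n => ∑ s ∈ (𝕋.part n).filter (fun s => s ≤ r),
        (S (succOf T (𝕋.part n) s) i - S s i)^2) atTop
        (𝓝 (∫ u in (0:ℝ)..r, α i i u)) := by
    intro i r hr
    apply Tendsto.congr _ (hcov i i r hr)
    intro n
    exact Finset.sum_congr rfl fun s _ => (pow_two _).symm
  have hpolar : ∀ i j : Fin d,
      Tendsto (fun n => ∑ s ∈ (𝕋.part n).filter (fun s => s ≤ t),
        gq i j s * ((S (succOf T (𝕋.part n) s) i - S s i)
          * (S (succOf T (𝕋.part n) s) j - S s j))) atTop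
        (𝓝 (∫ u in (0:ℝ)..t, gq i j u * α i j u)) := by
    intro i j
    exact weighted_polar_tendsto hT 𝕋.part hPIcc
      (fun n s => S (succOf T (𝕋.part n) s) i - S s i)
      (fun n s => S (succOf T (𝕋.part n) s) j - S s j)
      (α i i) (α j j) (α i j) (hα i i) (hα j j) (hα i j)
      (hii i) (hii j) (fun r hr => hcov i j r hr) (gq i j) (hgqc i j) htIcc
  have hcorr : ∀ i j : Fin d,
      Tendsto (fun n => (pd2 (v 0) i j (S 0) - gq i j 0)
        * ((S (succOf T (𝕋.part n) 0) i - S 0 i)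
            * (S (succOf T (𝕋.part n) 0) j - S 0 j))) atTop (𝓝 0) := by
    intro i j
    have h1 := ((hΔ0 i).mul (hΔ0 j)).const_mul (pd2 (v 0) i j (S 0) - gq i j 0)
    simpa using h1
  have hPDid : ∀ (n : ℕ) (i j : Fin d),
      ∑ s ∈ (𝕋.part n).filter (fun s => s ≤ t),
        pd2 (v s) i j (S s) * ((S (succOf T (𝕋.part n) s) i - S s i)
          * (S (succOf T (𝕋.part n) s) j - S s j))
      = (∑ s ∈ (𝕋.part n).filter (fun s => s ≤ t),
          gq i j s * ((S (succOf T (𝕋.part n) s) i - S s i)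
            * (S (succOf T (𝕋.part n) s) j - S s j)))
        + (pd2 (v 0) i j (S 0) - gq i j 0)
          * ((S (succOf T (𝕋.part n) 0) i - S 0 i)
              * (S (succOf T (𝕋.part n) 0) j - S 0 j)) := by
    intro n i j
    have h0Q : (0:ℝ) ∈ (𝕋.part n).filter (fun s => s ≤ t) :=
      Finset.mem_filter.2 ⟨h0P n, ht0⟩
    have hsingle : ∑ s ∈ (𝕋.part n).filter (fun s => s ≤ t),
        ((pd2 (v s) i j (S s) - gq i j s)
          * ((S (succOf T (𝕋.part n) s) i - S s i)
            * (S (succOf T (𝕋.part n) s) j - S s j)))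
        = (pd2 (v 0) i j (S 0) - gq i j 0)
          * ((S (succOf T (𝕋.part n) 0) i - S 0 i)
              * (S (succOf T (𝕋.part n) 0) j - S 0 j)) := by
      apply Finset.sum_eq_single_of_mem 0 h0Q
      intro s hs hsne
      obtain ⟨hsP, hst⟩ := Finset.mem_filter.1 hs
      have hs0 : 0 < s := lt_of_le_of_ne (hPIcc n hsP).1 (Ne.symm hsne)
      rw [hpd2g s hs0 hst i j, hgq_eq i j s hst, sub_self, zero_mul]
    calc ∑ s ∈ (𝕋.part n).filter (fun s => s ≤ t),
          pd2 (v s) i j (S s) * ((S (succOf T (𝕋.part n) s) i - S s i)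
            * (S (succOf T (𝕋.part n) s) j - S s j))
        = (∑ s ∈ (𝕋.part n).filter (fun s => s ≤ t),
            gq i j s * ((S (succOf T (𝕋.part n) s) i - S s i)
              * (S (succOf T (𝕋.part n) s) j - S s j)))
          + ∑ s ∈ (𝕋.part n).filter (fun s => s ≤ t),
            ((pd2 (v s) i j (S s) - gq i j s)
              * ((S (succOf T (𝕋.part n) s) i - S s i)
                * (S (succOf T (𝕋.part n) s) j - S s j))) := by
          rw [← Finset.sum_add_distrib]
          exact Finset.sum_congr rfl fun s _ => by ring
      _ = _ := by rw [hsingle]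
  have hsumPD : ∀ i j : Fin d,
      Tendsto (fun n => ∑ s ∈ (𝕋.part n).filter (fun s => s ≤ t),
        pd2 (v s) i j (S s) * ((S (succOf T (𝕋.part n) s) i - S s i)
          * (S (succOf T (𝕋.part n) s) j - S s j))) atTop
        (𝓝 (∫ u in (0:ℝ)..t, gq i j u * α i j u)) := by
    intro i j
    have h1 := (hpolar i j).add (hcorr i j)
    rw [add_zero] at h1
    exact Tendsto.congr (fun n => (hPDid n i j).symm) h1
  set Iquad : ℝ := (1/2) * ∑ i, ∑ j, ∫ u in (0:ℝ)..t, gq i j u * α i j u with hIquaddef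
  set Qsum : ℕ → ℝ := fun n => ∑ s ∈ (𝕋.part n).filter (fun s => s ≤ t),
    (1/2) * ∑ i, ∑ j, pd2 (v s) i j (S s) * ((S (succOf T (𝕋.part n) s) i - S s i)
      * (S (succOf T (𝕋.part n) s) j - S s j)) with hQsumdef
  have hQuadId : ∀ n, Qsum n = (1/2) * ∑ i, ∑ j,
      ∑ s ∈ (𝕋.part n).filter (fun s => s ≤ t),
        pd2 (v s) i j (S s) * ((S (succOf T (𝕋.part n) s) i - S s i)
          * (S (succOf T (𝕋.part n) s) j - S s j)) := by
    intro n
    simp only [hQsumdef]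
    rw [← Finset.mul_sum]
    congr 1
    rw [Finset.sum_comm]
    exact Finset.sum_congr rfl fun i _ => Finset.sum_comm
  have hQuad : Tendsto Qsum atTop (𝓝 Iquad) := by
    have h1 : Tendsto (fun n => (1/2 : ℝ) * ∑ i, ∑ j,
        ∑ s ∈ (𝕋.part n).filter (fun s => s ≤ t),
          pd2 (v s) i j (S s) * ((S (succOf T (𝕋.part n) s) i - S s i)
            * (S (succOf T (𝕋.part n) s) j - S s j))) atTop (𝓝 Iquad) := by
      apply Tendsto.const_mul
      apply tendsto_finset_sum
      intro i _
      exact tendsto_finset_sum _ (fun j _ => hsumPD i j)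
    exact Tendsto.congr (fun n => (hQuadId n).symm) h1
  ------------------------------------------------------------------
  -- (L-Rem)
  ------------------------------------------------------------------
  set Rsum : ℕ → ℝ := fun n => ∑ s ∈ (𝕋.part n).filter (fun s => s ≤ t),
    (v s (S (succOf T (𝕋.part n) s)) - v s (S s)
      - (∑ k, pd1 (v s) k (S s) * (S (succOf T (𝕋.part n) s) k - S s k))
      - (1/2) * ∑ i, ∑ j, pd2 (v s) i j (S s) * ((S (succOf T (𝕋.part n) s) i - S s i)
          * (S (succOf T (𝕋.part n) s) j - S s j))) with hRsumdef
  -- uniform continuity of all gXX at once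
  have hXXuc : ∀ ε > 0, ∃ δ > 0, ∀ p ∈ Set.Icc (0:ℝ) t₁ ×ˢ C,
      ∀ q ∈ Set.Icc (0:ℝ) t₁ ×ˢ C, dist p q < δ →
        ∀ i j : Fin d, |gXX i j p - gXX i j q| ≤ ε := by
    intro ε hε
    have hAllc : ContinuousOn (fun p : ℝ × (Fin d → ℝ) => fun i j : Fin d => gXX i j p)
        (Set.Icc (0:ℝ) t₁ ×ˢ C) := by
      apply continuousOn_pi.2
      intro i
      apply continuousOn_pi.2
      intro j
      exact (hgXXc i j).mono hK2sub
    have h1 := hK2comp.uniformContinuousOn_of_continuous hAllc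
    rw [Metric.uniformContinuousOn_iff] at h1
    obtain ⟨δ, hδ, hδ'⟩ := h1 ε hε
    refine ⟨δ, hδ, fun p hp q hq hpq i j => ?_⟩
    have h2 := hδ' p hp q hq hpq
    have h3 := (dist_pi_lt_iff hε).1 h2 i
    have h4 := (dist_pi_lt_iff hε).1 h3 j
    rw [← Real.dist_eq]
    exact h4.le
  set KQ : ℝ := ∑ i : Fin d, (|∫ u in (0:ℝ)..t, α i i u| + 1) with hKQdef
  have hKQnn : 0 ≤ KQ := Finset.sum_nonneg fun i _ => by positivity
  have hKQev : ∀ᶠ n in atTop, ∑ i : Fin d, covSum T 𝕋 S i i t n ≤ KQ := by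
    have h1 : ∀ i : Fin d, ∀ᶠ n in atTop,
        covSum T 𝕋 S i i t n ≤ |∫ u in (0:ℝ)..t, α i i u| + 1 := by
      intro i
      have h2 := Metric.tendsto_atTop.1 (hcov i i t htIcc) 1 one_pos
      obtain ⟨N, hN⟩ := h2
      rw [eventually_atTop]
      refine ⟨N, fun n hn => ?_⟩
      have h3 := hN n hn
      rw [Real.dist_eq] at h3
      have h4 := le_abs_self (covSum T 𝕋 S i i t n - ∫ u in (0:ℝ)..t, α i i u)
      have h5 := le_abs_self (∫ u in (0:ℝ)..t, α i i u)
      linarith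
    have h2 : ∀ᶠ n in atTop, ∀ i : Fin d,
        covSum T 𝕋 S i i t n ≤ |∫ u in (0:ℝ)..t, α i i u| + 1 := eventually_all.2 h1
    filter_upwards [h2] with n hn
    exact Finset.sum_le_sum fun i _ => hn i
  -- the s = 0 remainder term tends to 0
  have hrem0 : Tendsto (fun n => v 0 (S (succOf T (𝕋.part n) 0)) - v 0 (S 0)
      - (∑ k, pd1 (v 0) k (S 0) * (S (succOf T (𝕋.part n) 0) k - S 0 k))
      - (1/2) * ∑ i, ∑ j, pd2 (v 0) i j (S 0) * ((S (succOf T (𝕋.part n) 0) i - S 0 i)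
          * (S (succOf T (𝕋.part n) 0) j - S 0 j))) atTop (𝓝 0) := by
    have hv0c : ContinuousOn (fun u => v 0 (S u)) (Set.Icc 0 T) :=
      hv_cont.comp (continuousOn_const.prodMk hS)
        (fun u hu => ⟨⟨le_refl 0, hT.le⟩, hSD u hu⟩)
    have h1 : Tendsto (fun n => v 0 (S (succOf T (𝕋.part n) 0)) - v 0 (S 0)) atTop (𝓝 0) := by
      have := ((hv0c 0 ⟨le_refl 0, hT.le⟩).tendsto.comp hsucc0tend).sub_const (v 0 (S 0))
      simpa using this
    have h2 : Tendsto (fun n => ∑ k, pd1 (v 0) k (S 0)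
        * (S (succOf T (𝕋.part n) 0) k - S 0 k)) atTop (𝓝 0) := by
      have := tendsto_finset_sum (Finset.univ : Finset (Fin d))
        (fun k _ => (hΔ0 k).const_mul (pd1 (v 0) k (S 0)))
      simpa using this
    have h3 : Tendsto (fun n => (1/2 : ℝ) * ∑ i, ∑ j, pd2 (v 0) i j (S 0)
        * ((S (succOf T (𝕋.part n) 0) i - S 0 i)
          * (S (succOf T (𝕋.part n) 0) j - S 0 j))) atTop (𝓝 0) := by
      have h4 := tendsto_finset_sum (Finset.univ : Finset (Fin d))
        (fun i (_ : i ∈ Finset.univ) => tendsto_finset_sum (Finset.univ : Finset (Fin d))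
          (fun j (_ : j ∈ Finset.univ) =>
            ((hΔ0 i).mul (hΔ0 j)).const_mul (pd2 (v 0) i j (S 0))))
      have h5 := h4.const_mul (1/2 : ℝ)
      simpa using h5
    have := (h1.sub h2).sub h3
    simpa using this
  have hRem : Tendsto Rsum atTop (𝓝 0) := by
    apply tendsto_of_abs_le_eventually
    intro ε' hε'
    set ε : ℝ := ε' / (1 + d * KQ) with hεdef
    have hεpos : 0 < ε := div_pos hε' (by positivity)
    obtain ⟨δ4, hδ4, hXXδ⟩ := hXXuc ε hεpos
    obtain ⟨δ5, hδ5, hSδ5⟩ := hSuc δ4 hδ4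
    set δ' : ℝ := min δ5 (t₁ - t) with hδ'def
    have hδ'pos : 0 < δ' := lt_min hδ5 (by linarith)
    obtain ⟨N, hN⟩ := 𝕋.mesh_to_zero δ' hδ'pos
    have hmeshEv : ∀ᶠ n in atTop, ∀ s ∈ 𝕋.part n,
        succOf T (𝕋.part n) s - s < δ' := eventually_atTop.2 ⟨N, fun n hn => hN n hn⟩
    have hrem0Ev : ∀ᶠ n in atTop, |v 0 (S (succOf T (𝕋.part n) 0)) - v 0 (S 0)
        - (∑ k, pd1 (v 0) k (S 0) * (S (succOf T (𝕋.part n) 0) k - S 0 k))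
        - (1/2) * ∑ i, ∑ j, pd2 (v 0) i j (S 0)
            * ((S (succOf T (𝕋.part n) 0) i - S 0 i)
              * (S (succOf T (𝕋.part n) 0) j - S 0 j))| ≤ ε := by
      have h1 := Metric.tendsto_atTop.1 hrem0 ε hεpos
      obtain ⟨N1, hN1⟩ := h1
      rw [eventually_atTop]
      refine ⟨N1, fun n hn => ?_⟩
      have := hN1 n hn
      rw [Real.dist_eq, sub_zero] at this
      exact this.le
    filter_upwards [hmeshEv, hrem0Ev, hKQev] with n hmesh hr0 hKQn
    -- split off the s = 0 term
    have h0Q : (0:ℝ) ∈ (𝕋.part n).filter (fun s => s ≤ t) :=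
      Finset.mem_filter.2 ⟨h0P n, ht0⟩
    have hsplit : Rsum n = (v 0 (S (succOf T (𝕋.part n) 0)) - v 0 (S 0)
        - (∑ k, pd1 (v 0) k (S 0) * (S (succOf T (𝕋.part n) 0) k - S 0 k))
        - (1/2) * ∑ i, ∑ j, pd2 (v 0) i j (S 0)
            * ((S (succOf T (𝕋.part n) 0) i - S 0 i)
              * (S (succOf T (𝕋.part n) 0) j - S 0 j)))
        + ∑ s ∈ ((𝕋.part n).filter (fun s => s ≤ t)).erase 0,
          (v s (S (succOf T (𝕋.part n) s)) - v s (S s)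
            - (∑ k, pd1 (v s) k (S s) * (S (succOf T (𝕋.part n) s) k - S s k))
            - (1/2) * ∑ i, ∑ j, pd2 (v s) i j (S s)
                * ((S (succOf T (𝕋.part n) s) i - S s i)
                  * (S (succOf T (𝕋.part n) s) j - S s j))) := by
      simp only [hRsumdef]
      exact (Finset.add_sum_erase _ _ h0Q).symm
    -- bound each remainder for s ≠ 0
    have hbound : ∀ s ∈ ((𝕋.part n).filter (fun s => s ≤ t)).erase 0,
        |v s (S (succOf T (𝕋.part n) s)) - v s (S s)
          - (∑ k, pd1 (v s) k (S s) * (S (succOf T (𝕋.part n) s) k - S s k))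
          - (1/2) * ∑ i, ∑ j, pd2 (v s) i j (S s)
              * ((S (succOf T (𝕋.part n) s) i - S s i)
                * (S (succOf T (𝕋.part n) s) j - S s j))|
        ≤ ε * ((d : ℝ) * ∑ k, (S (succOf T (𝕋.part n) s) k - S s k)^2) := by
      intro s hs
      obtain ⟨hsne, hsQ⟩ := Finset.mem_erase.1 hs
      obtain ⟨hsP, hst⟩ := Finset.mem_filter.1 hsQ
      have hs0 : 0 < s := lt_of_le_of_ne (hPIcc n hsP).1 (Ne.symm hsne)
      have hsIcc : s ∈ Set.Icc (0:ℝ) T := hPIcc n hsP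
      have hs'Icc : succOf T (𝕋.part n) s ∈ Set.Icc (0:ℝ) T := hsuccIcc n s hsP
      have hsIoo : s ∈ interior (Set.Ico (0:ℝ) T) := by
        rw [hintIco]; exact ⟨hs0, lt_of_le_of_lt hst htT⟩
      have hss' : s ≤ succOf T (𝕋.part n) s := le_succOf (hPIcc n) hsP
      set u : Fin d → ℝ := fun k => S (succOf T (𝕋.part n) s) k - S s k with hu
      have hxu : S s + u = S (succOf T (𝕋.part n) s) := by
        funext k; simp [hu]
      -- points on the segment lie in C
      have hsegC : ∀ r ∈ Set.Icc (0:ℝ) 1, S s + r • u ∈ C := by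
        intro r hr
        have hcomb := hCconv (hSC s hsIcc) (hSC _ hs'Icc)
          (by linarith [hr.2] : (0:ℝ) ≤ 1 - r) hr.1 (by ring)
        have heq : S s + r • u = (1 - r) • S s + r • S (succOf T (𝕋.part n) s) := by
          funext k
          simp only [Pi.add_apply, Pi.smul_apply, smul_eq_mul, hu]
          ring
        rwa [heq]
      have hnorm_u : ‖u‖ = dist (S (succOf T (𝕋.part n) s)) (S s) := by
        rw [dist_eq_norm]
        rfl
      have hdistS : dist (S (succOf T (𝕋.part n) s)) (S s) < δ4 := by
        apply hSδ5 _ hs'Icc _ hsIcc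
        have h1 := hmesh s hsP
        rw [abs_sub_lt_iff]
        constructor
        · have : δ' ≤ δ5 := min_le_left _ _
          linarith
        · linarith [hδ5, hδ'pos]
      have hosc : ∀ r ∈ Set.Icc (0:ℝ) 1, ∀ i j : Fin d,
          |pd2 (v s) i j (S s + r • u) - pd2 (v s) i j (S s)| ≤ ε := by
        intro r hr i j
        have hyC : S s + r • u ∈ C := hsegC r hr
        have hyD : S s + r • u ∈ D := hCD hyC
        have hpd2y : pd2 (v s) i j (S s + r • u) = gXX i j (s, S s + r • u) :=
          ((hders s hsIoo _ hyD).2.2 i j).symm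
        have hpd2x : pd2 (v s) i j (S s) = gXX i j (s, S s) :=
          ((hders s hsIoo _ (hSD s hsIcc)).2.2 i j).symm
        rw [hpd2y, hpd2x]
        have hsIcc₁ : s ∈ Set.Icc (0:ℝ) t₁ := ⟨hs0.le, le_trans hst htt₁.le⟩
        apply hXXδ (s, S s + r • u) ⟨hsIcc₁, hyC⟩ (s, S s) ⟨hsIcc₁, hSC s hsIcc⟩
        rw [Prod.dist_eq]
        simp only [dist_self]
        rw [max_eq_right dist_nonneg]
        calc dist (S s + r • u) (S s) = ‖r • u‖ := by
              rw [dist_eq_norm]; congr 1; funext k; simp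
          _ = |r| * ‖u‖ := by rw [norm_smul, Real.norm_eq_abs]
          _ ≤ 1 * ‖u‖ := by
              apply mul_le_mul_of_nonneg_right _ (norm_nonneg _)
              rw [abs_of_nonneg hr.1]; exact hr.2
          _ = ‖u‖ := one_mul _
          _ < δ4 := by rw [hnorm_u]; exact hdistS
      have htaylor := taylor2_bound D (v s) (S s) u (fun r hr => hCD (hsegC r hr))
        (fun y hy => by
          have hjoint := hv_C12.diff s hsIoo y hy
          have hmap : DifferentiableAt ℝ (fun y' : Fin d → ℝ => ((s, y') : ℝ × (Fin d → ℝ))) y :=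
            (differentiableAt_const s).prodMk differentiableAt_id
          exact hjoint.comp y hmap)
        (fun y hy j => hv_C12.diff2 s hsIoo y hy j)
        ε hεpos.le hosc
      rw [hxu] at htaylor
      have hshape : (1/2 : ℝ) * ∑ i, ∑ j, pd2 (v s) i j (S s)
          * ((S (succOf T (𝕋.part n) s) i - S s i) * (S (succOf T (𝕋.part n) s) j - S s j))
          = (1/2 : ℝ) * ∑ i, ∑ j, pd2 (v s) i j (S s) * u i * u j := by
        congr 1
        exact Finset.sum_congr rfl fun i _ => Finset.sum_congr rfl fun j _ => by
          simp only [hu]; ring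
      have hξshape : (∑ k, pd1 (v s) k (S s) * (S (succOf T (𝕋.part n) s) k - S s k))
          = ∑ k, pd1 (v s) k (S s) * u k := by
        exact Finset.sum_congr rfl fun k _ => by simp only [hu]
      rw [hshape, hξshape]
      calc |v s (S (succOf T (𝕋.part n) s)) - v s (S s) - (∑ k, pd1 (v s) k (S s) * u k)
            - (1/2) * ∑ i, ∑ j, pd2 (v s) i j (S s) * u i * u j|
          ≤ ε * (∑ i, |u i|)^2 := htaylor
        _ ≤ ε * ((d : ℝ) * ∑ k, (S (succOf T (𝕋.part n) s) k - S s k)^2) := by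
            apply mul_le_mul_of_nonneg_left _ hεpos.le
            have hcs := sq_sum_le_card_mul_sum_sq (s := (Finset.univ : Finset (Fin d)))
              (f := fun i => |u i|)
            simp only [Finset.card_univ, Fintype.card_fin, sq_abs] at hcs
            calc (∑ i, |u i|)^2 ≤ (d : ℝ) * ∑ i, (u i)^2 := hcs
              _ = (d : ℝ) * ∑ k, (S (succOf T (𝕋.part n) s) k - S s k)^2 := rfl
    -- assemble
    have hsum_bound : ∑ s ∈ ((𝕋.part n).filter (fun s => s ≤ t)).erase 0,
        |v s (S (succOf T (𝕋.part n) s)) - v s (S s)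
          - (∑ k, pd1 (v s) k (S s) * (S (succOf T (𝕋.part n) s) k - S s k))
          - (1/2) * ∑ i, ∑ j, pd2 (v s) i j (S s)
              * ((S (succOf T (𝕋.part n) s) i - S s i)
                * (S (succOf T (𝕋.part n) s) j - S s j))|
        ≤ ε * ((d : ℝ) * KQ) := by
      calc ∑ s ∈ ((𝕋.part n).filter (fun s => s ≤ t)).erase 0, _
          ≤ ∑ s ∈ ((𝕋.part n).filter (fun s => s ≤ t)).erase 0,
            ε * ((d : ℝ) * ∑ k, (S (succOf T (𝕋.part n) s) k - S s k)^2) :=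
            Finset.sum_le_sum hbound
        _ ≤ ∑ s ∈ (𝕋.part n).filter (fun s => s ≤ t),
            ε * ((d : ℝ) * ∑ k, (S (succOf T (𝕋.part n) s) k - S s k)^2) := by
            apply Finset.sum_le_sum_of_subset_of_nonneg (Finset.erase_subset _ _)
            intro s _ _
            positivity
        _ = ε * ((d : ℝ) * ∑ s ∈ (𝕋.part n).filter (fun s => s ≤ t),
            ∑ k, (S (succOf T (𝕋.part n) s) k - S s k)^2) := by
            rw [← Finset.mul_sum, ← Finset.mul_sum]
        _ = ε * ((d : ℝ) * ∑ k : Fin d, covSum T 𝕋 S k k t n) := by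
            congr 2
            rw [Finset.sum_comm]
            apply Finset.sum_congr rfl
            intro k _
            simp only [covSum]
            exact Finset.sum_congr rfl fun s _ => pow_two _
        _ ≤ ε * ((d : ℝ) * KQ) := by
            apply mul_le_mul_of_nonneg_left _ hεpos.le
            exact mul_le_mul_of_nonneg_left hKQn (by positivity)
    rw [sub_zero, hsplit]
    calc |_ + _| ≤ |v 0 (S (succOf T (𝕋.part n) 0)) - v 0 (S 0)
          - (∑ k, pd1 (v 0) k (S 0) * (S (succOf T (𝕋.part n) 0) k - S 0 k))
          - (1/2) * ∑ i, ∑ j, pd2 (v 0) i j (S 0)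
              * ((S (succOf T (𝕋.part n) 0) i - S 0 i)
                * (S (succOf T (𝕋.part n) 0) j - S 0 j))|
          + |∑ s ∈ ((𝕋.part n).filter (fun s => s ≤ t)).erase 0,
            (v s (S (succOf T (𝕋.part n) s)) - v s (S s)
              - (∑ k, pd1 (v s) k (S s) * (S (succOf T (𝕋.part n) s) k - S s k))
              - (1/2) * ∑ i, ∑ j, pd2 (v s) i j (S s)
                  * ((S (succOf T (𝕋.part n) s) i - S s i)
                    * (S (succOf T (𝕋.part n) s) j - S s j)))| := abs_add_le _ _
      _ ≤ ε + ε * ((d : ℝ) * KQ) := by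
          apply add_le_add hr0
          exact le_trans (Finset.abs_sum_le_sum_abs _ _) hsum_bound
      _ = ε * (1 + (d : ℝ) * KQ) := by ring
      _ = ε' := by
          simp only [hεdef]
          field_simp
  ------------------------------------------------------------------
  -- (PDE): Itime + Iquad = 0
  ------------------------------------------------------------------
  have hIIle : Set.uIcc (0:ℝ) t ⊆ Set.Icc 0 T :=
    Set.uIcc_subset_Icc ⟨le_refl 0, hT.le⟩ htIcc
  have hIIle₁ : Set.uIcc (0:ℝ) t ⊆ Set.Icc 0 t₁ :=
    Set.uIcc_subset_Icc ⟨le_refl 0, ht₁0⟩ ⟨ht0, htt₁.le⟩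
  have hintgq : ∀ i j : Fin d,
      IntervalIntegrable (fun u => gq i j u * α i j u) MeasureTheory.volume 0 t :=
    fun i j => (((hgqc i j).mono hIIle).mul ((hα i j).mono hIIle)).intervalIntegrable
  have hintG1 : IntervalIntegrable (fun u => gT (u, S u)) MeasureTheory.volume 0 t :=
    (hG1c.mono hIIle₁).intervalIntegrable
  have hFc : ∀ i : Fin d, ContinuousOn (fun u => ∑ j, gq i j u * α i j u) (Set.Icc 0 T) :=
    fun i => continuousOn_finset_sum _ (fun j _ => (hgqc i j).mul (hα i j))
  have hintF : ∀ i : Fin d, IntervalIntegrable (fun u => ∑ j, gq i j u * α i j u)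
      MeasureTheory.volume 0 t := fun i => ((hFc i).mono hIIle).intervalIntegrable
  have hintFF : IntervalIntegrable (fun u => ∑ i, ∑ j, gq i j u * α i j u)
      MeasureTheory.volume 0 t :=
    ((continuousOn_finset_sum _ (fun i _ => hFc i)).mono hIIle).intervalIntegrable
  have hIq_eq : Iquad = ∫ u in (0:ℝ)..t, (1/2) * ∑ i, ∑ j, gq i j u * α i j u := by
    simp only [hIquaddef]
    rw [intervalIntegral.integral_const_mul]
    congr 1
    have h1 : ∀ i : Fin d, ∑ j, ∫ u in (0:ℝ)..t, gq i j u * α i j u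
        = ∫ u in (0:ℝ)..t, ∑ j, gq i j u * α i j u :=
      fun i => (intervalIntegral.integral_finset_sum (fun j _ => hintgq i j)).symm
    calc ∑ i, ∑ j, ∫ u in (0:ℝ)..t, gq i j u * α i j u
        = ∑ i, ∫ u in (0:ℝ)..t, ∑ j, gq i j u * α i j u :=
          Finset.sum_congr rfl fun i _ => h1 i
      _ = ∫ u in (0:ℝ)..t, ∑ i, ∑ j, gq i j u * α i j u :=
          (intervalIntegral.integral_finset_sum (fun i _ => hintF i)).symm
  have hval0 : Itime + Iquad = 0 := by
    have hFzero : ∀ u ∈ Set.Ioc (0:ℝ) t,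
        gT (u, S u) + (1/2) * ∑ i, ∑ j, gq i j u * α i j u = 0 := by
      intro u hu
      have huIoo : u ∈ Set.Ioo (0:ℝ) T := ⟨hu.1, lt_of_le_of_lt hu.2 htT⟩
      have huIcc : u ∈ Set.Icc (0:ℝ) T := ⟨hu.1.le, le_trans hu.2 htT.le⟩
      have hgTeq : gT (u, S u) = deriv (fun τ => v τ (S u)) u :=
        (hders u (by rw [hintIco]; exact huIoo) (S u) (hSD u huIcc)).1
      have hq : ∀ i j : Fin d, gq i j u = pd2 (v u) i j (S u) := fun i j => by
        rw [hgq_eq i j u hu.2, ← hpd2g u hu.1 hu.2 i j]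
      have hp := hpde u huIoo
      have hswap : ∑ i, ∑ j, gq i j u * α i j u
          = ∑ i, ∑ j, α i j u * pd2 (v u) i j (S u) :=
        Finset.sum_congr rfl fun i _ => Finset.sum_congr rfl fun j _ => by
          rw [hq i j]; ring
      rw [hgTeq, hswap]
      linarith
    have h1 : Itime + Iquad = ∫ u in (0:ℝ)..t,
        (gT (u, S u) + (1/2) * ∑ i, ∑ j, gq i j u * α i j u) := by
      rw [hIq_eq, hItimedef,
        ← intervalIntegral.integral_add hintG1 (hintFF.const_mul (1/2))]
    rw [h1, intervalIntegral.integral_of_le ht0,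
      MeasureTheory.setIntegral_congr_fun measurableSet_Ioc hFzero]
    simp
  ------------------------------------------------------------------
  -- assembly
  ------------------------------------------------------------------
  have hXdecomp : ∀ n, (∑ s ∈ (𝕋.part n).filter (fun s => s ≤ t),
      ∑ k, pd1 (v s) k (S s) * (S (succOf T (𝕋.part n) s) k - S s k))
      = (v (σ n) (S (σ n)) - v 0 (S 0)) - Tsum n - Qsum n - Rsum n := by
    intro n
    have htelG := htelescope (fun r => v r (S r)) n
    have hsum : Tsum n + (∑ s ∈ (𝕋.part n).filter (fun s => s ≤ t),
        ∑ k, pd1 (v s) k (S s) * (S (succOf T (𝕋.part n) s) k - S s k))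
        + Qsum n + Rsum n
        = v (σ n) (S (σ n)) - v 0 (S 0) := by
      simp only [hTsumdef, hQsumdef, hRsumdef]
      rw [← Finset.sum_add_distrib, ← Finset.sum_add_distrib, ← Finset.sum_add_distrib]
      rw [← htelG]
      exact Finset.sum_congr rfl fun s _ => by ring
    linarith
  have hfinal := (((hTel.sub (tendsto_const_nhds (x := v 0 (S 0)))).sub hTime).sub hQuad).sub hRem
  have hL : v t (S t) - v 0 (S 0) = (v t (S t) - v 0 (S 0)) - Itime - Iquad - 0 := by
    linarith
  rw [hL]
  exact Tendsto.congr (fun n => (hXdecomp n).symm) hfinal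
/-- Strictly pathwise Delta hedging of `f(S(T))`: a solution `v` of (TVP) yields, for every
`S ∈ 𝒮_a`, a self-financing strategy `ξ(t) = ∇ₓv(t,S(t))` with portfolio value `v(t,S(t))`
replicating the payoff `f(S(T))`; analogously on `ℝ₊^d` with `ℒ⁺` and `𝒮_a^+`. -/
theorem stmt9 (T : ℝ) (hT : 0 < T) (𝕋 : PartitionSeq T) (d : ℕ)
    (a aP : ℝ → (Fin d → ℝ) → Fin d → Fin d → ℝ)
    (ha_cont : ∀ i j, ContinuousOn (fun p : ℝ × (Fin d → ℝ) => a p.1 p.2 i j)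
      (Set.Icc 0 T ×ˢ (Set.univ : Set (Fin d → ℝ))))
    (ha_symm : ∀ t ∈ Set.Icc (0 : ℝ) T, ∀ x : Fin d → ℝ, ∀ i j, a t x i j = a t x j i)
    (ha_pd : ∀ t ∈ Set.Icc (0 : ℝ) T, ∀ x : Fin d → ℝ, ∀ y : Fin d → ℝ, y ≠ 0 →
      0 < ∑ i, ∑ j, a t x i j * y i * y j)
    (haP_cont : ∀ i j, ContinuousOn (fun p : ℝ × (Fin d → ℝ) => aP p.1 p.2 i j)
      (Set.Icc 0 T ×ˢ posOrth d))
    (haP_symm : ∀ t ∈ Set.Icc (0 : ℝ) T, ∀ x ∈ posOrth d, ∀ i j, aP t x i j = aP t x j i)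
    (haP_pd : ∀ t ∈ Set.Icc (0 : ℝ) T, ∀ x ∈ posOrth d, ∀ y : Fin d → ℝ, y ≠ 0 →
      0 < ∑ i, ∑ j, aP t x i j * y i * y j)
    -- `v` solves (TVP) with terminal condition `f`
    (f : (Fin d → ℝ) → ℝ) (hf : Continuous f)
    (v : ℝ → (Fin d → ℝ) → ℝ)
    (hv_cont : ContinuousOn (fun q : ℝ × (Fin d → ℝ) => v q.1 q.2)
      (Set.Icc 0 T ×ˢ (Set.univ : Set (Fin d → ℝ))))
    (hv_C12 : IsC12 (Set.Ico 0 T) (Set.univ : Set (Fin d → ℝ)) v)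
    (hv_pde : ∀ t ∈ Set.Ico (0 : ℝ) T, ∀ x : Fin d → ℝ,
      tderiv (Set.Icc 0 T) v t x + (1 / 2) * ∑ i, ∑ j, a t x i j * pd2 (v t) i j x = 0)
    (hv_term : ∀ x, v T x = f x)
    -- `vP` solves (TVP⁺) with terminal condition `fP`
    (fP : (Fin d → ℝ) → ℝ) (hfP : ContinuousOn fP (posOrth d))
    (vP : ℝ → (Fin d → ℝ) → ℝ)
    (hvP_cont : ContinuousOn (fun q : ℝ × (Fin d → ℝ) => vP q.1 q.2)
      (Set.Icc 0 T ×ˢ posOrth d))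
    (hvP_C12 : IsC12 (Set.Ico 0 T) (posOrth d) vP)
    (hvP_pde : ∀ t ∈ Set.Ico (0 : ℝ) T, ∀ x ∈ posOrth d,
      tderiv (Set.Icc 0 T) vP t x
        + (1 / 2) * ∑ i, ∑ j, aP t x i j * x i * x j * pd2 (vP t) i j x = 0)
    (hvP_term : ∀ x ∈ posOrth d, vP T x = fP x) :
    (∀ S ∈ SclassA T 𝕋 a,
      (∀ t ∈ Set.Ico (0 : ℝ) T,
        HasFollmerIntegral T 𝕋 (fun s k => pd1 (v s) k (S s)) S 0 t (v t (S t) - v 0 (S 0))) ∧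
      Tendsto (fun τ => v τ (S τ)) (𝓝[<] T) (𝓝 (f (S T)))) ∧
    (∀ S ∈ SclassAPos T 𝕋 aP,
      (∀ t ∈ Set.Ico (0 : ℝ) T,
        HasFollmerIntegral T 𝕋 (fun s k => pd1 (vP s) k (S s)) S 0 t
          (vP t (S t) - vP 0 (S 0))) ∧
      Tendsto (fun τ => vP τ (S τ)) (𝓝[<] T) (𝓝 (fP (S T)))) := by
  constructor
  ------------------------------------------------------------------
  -- classical case
  ------------------------------------------------------------------
  · intro S hs
    obtain ⟨hScont, hScov⟩ := hs
    -- compact convex superset of the trajectory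
    obtain ⟨R, hR⟩ := ((isCompact_Icc.image_of_continuousOn hScont).isBounded).subset_closedBall 0
    have hSC : ∀ u ∈ Set.Icc (0:ℝ) T, S u ∈ Metric.closedBall (0 : Fin d → ℝ) R :=
      fun u hu => hR ⟨u, hu, rfl⟩
    have hGc : ContinuousOn (fun u => v u (S u)) (Set.Icc 0 T) :=
      hv_cont.comp (continuousOn_id.prodMk hScont)
        (fun u hu => ⟨hu, Set.mem_univ _⟩)
    have hmaster : ∀ t' ∈ Set.Ico (0:ℝ) T,
        Tendsto (fun n => ∑ s ∈ (𝕋.part n).filter (fun s => s ≤ t'),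
          ∑ k, pd1 (v s) k (S s) * (S (succOf T (𝕋.part n) s) k - S s k)) atTop
          (𝓝 (v t' (S t') - v 0 (S 0))) := by
      intro t' ht'
      apply master_ito hT 𝕋 Set.univ S hScont (fun u _ => Set.mem_univ _)
        (Metric.closedBall 0 R) (isCompact_closedBall _ _) (Set.subset_univ _)
        (convex_closedBall _ _) hSC
        (fun i j u => a u (S u) i j)
        (fun i j => (ha_cont i j).comp (continuousOn_id.prodMk hScont)
          (fun u hu => ⟨hu, Set.mem_univ _⟩))
        (fun i j r hr => hScov i j r hr)
        v hv_cont hv_C12 _ ht'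
      intro u hu
      have hp := hv_pde u ⟨hu.1.le, hu.2⟩ (S u)
      have hder : tderiv (Set.Icc 0 T) v u (S u) = deriv (fun τ => v τ (S u)) u := by
        unfold tderiv
        exact derivWithin_of_mem_nhds (Icc_mem_nhds hu.1 hu.2)
      rw [hder] at hp
      exact hp
    refine ⟨fun t' ht' => ?_, ?_⟩
    · -- Föllmer integral
      unfold HasFollmerIntegral
      apply Tendsto.congr _ (hmaster t' ht')
      intro n
      apply Finset.sum_congr _ (fun s _ => rfl)
      apply Finset.filter_congr
      intro s hsP
      simp [(𝕋.subset_Icc n hsP).1]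
    · -- terminal limit
      have h1 : Tendsto (fun u => v u (S u)) (𝓝[Set.Ico 0 T] T) (𝓝 (v T (S T))) :=
        (hGc T ⟨hT.le, le_refl T⟩).tendsto.mono_left
          (nhdsWithin_mono T Set.Ico_subset_Icc_self)
      rw [nhdsWithin_Ico_eq_nhdsLT hT] at h1
      rw [← hv_term (S T)]
      exact h1
  ------------------------------------------------------------------
  -- positive orthant case
  ------------------------------------------------------------------
  · intro S hs
    obtain ⟨hScont, hSpos, hScov⟩ := hs
    have hSD : ∀ u ∈ Set.Icc (0:ℝ) T, S u ∈ posOrth d := fun u hu i => hSpos u hu i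
    -- compact convex box around the trajectory, inside the positive orthant
    have hminmax : ∀ i : Fin d, ∃ mi Mi : ℝ, 0 < mi ∧
        ∀ u ∈ Set.Icc (0:ℝ) T, mi ≤ S u i ∧ S u i ≤ Mi := by
      intro i
      have hci : ContinuousOn (fun u => S u i) (Set.Icc 0 T) :=
        (continuous_apply i).comp_continuousOn hScont
      obtain ⟨x₀, hx₀, hmin⟩ := isCompact_Icc.exists_isMinOn
        ⟨0, Set.left_mem_Icc.2 hT.le⟩ hci
      obtain ⟨x₁, hx₁, hmax⟩ := isCompact_Icc.exists_isMaxOn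
        ⟨0, Set.left_mem_Icc.2 hT.le⟩ hci
      exact ⟨S x₀ i, S x₁ i, hSpos x₀ hx₀ i,
        fun u hu => ⟨isMinOn_iff.1 hmin u hu, isMaxOn_iff.1 hmax u hu⟩⟩
    choose m M hm using hminmax
    have hCcomp : IsCompact (Set.Icc m M) := isCompact_Icc
    have hCconv : Convex ℝ (Set.Icc m M) := by
      rw [← Set.pi_univ_Icc]
      exact convex_pi (fun i _ => convex_Icc _ _)
    have hCD : Set.Icc m M ⊆ posOrth d := by
      intro x hx i
      exact lt_of_lt_of_le (hm i).1 (hx.1 i)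
    have hSC : ∀ u ∈ Set.Icc (0:ℝ) T, S u ∈ Set.Icc m M :=
      fun u hu => ⟨fun i => ((hm i).2 u hu).1, fun i => ((hm i).2 u hu).2⟩
    have hGc : ContinuousOn (fun u => vP u (S u)) (Set.Icc 0 T) :=
      hvP_cont.comp (continuousOn_id.prodMk hScont)
        (fun u hu => ⟨hu, hSD u hu⟩)
    have hαc : ∀ i j : Fin d,
        ContinuousOn (fun u => aP u (S u) i j * S u i * S u j) (Set.Icc 0 T) := by
      intro i j
      apply ContinuousOn.mul
      apply ContinuousOn.mul
      · exact (haP_cont i j).comp (continuousOn_id.prodMk hScont)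
          (fun u hu => ⟨hu, hSD u hu⟩)
      · exact (continuous_apply i).comp_continuousOn hScont
      · exact (continuous_apply j).comp_continuousOn hScont
    have hmaster : ∀ t' ∈ Set.Ico (0:ℝ) T,
        Tendsto (fun n => ∑ s ∈ (𝕋.part n).filter (fun s => s ≤ t'),
          ∑ k, pd1 (vP s) k (S s) * (S (succOf T (𝕋.part n) s) k - S s k)) atTop
          (𝓝 (vP t' (S t') - vP 0 (S 0))) := by
      intro t' ht'
      apply master_ito hT 𝕋 (posOrth d) S hScont hSD
        (Set.Icc m M) hCcomp hCD hCconv hSC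
        (fun i j u => aP u (S u) i j * S u i * S u j)
        hαc
        (fun i j r hr => hScov i j r hr)
        vP hvP_cont hvP_C12 _ ht'
      intro u hu
      have hp := hvP_pde u ⟨hu.1.le, hu.2⟩ (S u) (hSD u ⟨hu.1.le, hu.2.le⟩)
      have hder : tderiv (Set.Icc 0 T) vP u (S u) = deriv (fun τ => vP τ (S u)) u := by
        unfold tderiv
        exact derivWithin_of_mem_nhds (Icc_mem_nhds hu.1 hu.2)
      rw [hder] at hp
      exact hp
    refine ⟨fun t' ht' => ?_, ?_⟩
    · unfold HasFollmerIntegral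
      apply Tendsto.congr _ (hmaster t' ht')
      intro n
      apply Finset.sum_congr _ (fun s _ => rfl)
      apply Finset.filter_congr
      intro s hsP
      simp [(𝕋.subset_Icc n hsP).1]
    · have h1 : Tendsto (fun u => vP u (S u)) (𝓝[Set.Ico 0 T] T) (𝓝 (vP T (S T))) :=
        (hGc T ⟨hT.le, le_refl T⟩).tendsto.mono_left
          (nhdsWithin_mono T Set.Ico_subset_Icc_self)
      rw [nhdsWithin_Ico_eq_nhdsLT hT] at h1
      rw [← hvP_term (S T) (hSD T ⟨hT.le, le_refl T⟩)]
      exact h1
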